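/- arXiv:2409.10002 — 5 statements merged into one kernel-verified Lean document; each statement's English description precedes it below -/
import Mathlib

section
/- Let X₁ ⊆ ℂ^n and X₂ ⊆ ℂ^m be open sets, and let φ₁ and φ₂ be weights on X₁ and X₂ respectively, each satisfying the evaluation bound. Then the product weight φ₁φ₂ on X₁ × X₂, defined by (φ₁φ₂)(z₁,z₂) := φ₁(z₁)·φ₂(z₂), also satisfies the evaluation bound: for all compact sets Y₁ ⊆ X₁ and Y₂ ⊆ X₂ there exists a constant C such that |f(z₁,z₂)|² ≤ C·∫_{X₁×X₂} |f|²·φ₁φ₂ dλ for every f ∈ A²(X₁×X₂, φ₁φ₂) and every (z₁,z₂) ∈ Y₁×Y₂. -/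
open MeasureTheory

noncomputable section

/-- `f` belongs to the weighted Bergman space `A²(X, μ)`: it is holomorphic on `X` and
`|f|² μ` is integrable on `X`. -/
def MemA2 {E : Type*} [NormedAddCommGroup E] [NormedSpace ℂ E] [MeasureSpace E]
    (X : Set E) (μ : E → ℝ) (f : E → ℂ) : Prop :=
  DifferentiableOn ℂ f X ∧ IntegrableOn (fun x => ‖f x‖ ^ 2 * μ x) X volume

/-- The squared norm `‖f‖²_{X,μ} = ∫_X |f|² μ dλ`. -/
def normSqA2 {E : Type*} [NormedAddCommGroup E] [NormedSpace ℂ E] [MeasureSpace E]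
    (X : Set E) (μ : E → ℝ) (f : E → ℂ) : ℝ :=
  ∫ x in X, ‖f x‖ ^ 2 * μ x

/-- The inner product `⟨f,g⟩_{X,μ} = ∫_X f ·conj(g)· μ dλ`. -/
def innerA2 {E : Type*} [NormedAddCommGroup E] [NormedSpace ℂ E] [MeasureSpace E]
    (X : Set E) (μ : E → ℝ) (f g : E → ℂ) : ℂ :=
  ∫ x in X, f x * (starRingEnd ℂ) (g x) * (μ x : ℂ)

/-- `μ` is a weight on `X`: measurable and positive a.e. on `X`. -/
def IsWeight {E : Type*} [NormedAddCommGroup E] [NormedSpace ℂ E] [MeasureSpace E]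
    (X : Set E) (μ : E → ℝ) : Prop :=
  Measurable μ ∧ ∀ᵐ x ∂(volume.restrict X), 0 < μ x

/-- The weight `μ` on `X` satisfies the evaluation bound. -/
def EvalBound {E : Type*} [NormedAddCommGroup E] [NormedSpace ℂ E] [MeasureSpace E]
    (X : Set E) (μ : E → ℝ) : Prop :=
  ∀ K : Set E, K ⊆ X → IsCompact K → ∃ C : ℝ, ∀ f : E → ℂ, MemA2 X μ f →
    ∀ z ∈ K, ‖f z‖ ^ 2 ≤ C * normSqA2 X μ f

/-- The product weight `(φ₁φ₂)(z₁,z₂) = φ₁(z₁)·φ₂(z₂)`. -/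
def prodWeight {F G : Type*} (φ₁ : F → ℝ) (φ₂ : G → ℝ) : F × G → ℝ :=
  fun p => φ₁ p.1 * φ₂ p.2

lemma key_lintegral_bound {k : ℕ} (X : Set (Fin k → ℂ)) (hX : IsOpen X)
    (μ : (Fin k → ℂ) → ℝ) (hw : IsWeight X μ) (K : Set (Fin k → ℂ)) (C : ℝ)
    (hC : ∀ f : (Fin k → ℂ) → ℂ, MemA2 X μ f → ∀ z ∈ K, ‖f z‖ ^ 2 ≤ C * normSqA2 X μ f)
    (g : (Fin k → ℂ) → ℂ) (hg : DifferentiableOn ℂ g X) {z : Fin k → ℂ} (hz : z ∈ K) :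
    ENNReal.ofReal (‖g z‖ ^ 2) ≤ ENNReal.ofReal (max C 1) *
      ∫⁻ x in X, ENNReal.ofReal (‖g x‖ ^ 2) * ENNReal.ofReal (μ x) := by
  set I := ∫⁻ x in X, ENNReal.ofReal (‖g x‖ ^ 2) * ENNReal.ofReal (μ x) with hI
  have hpos : ∀ᵐ x ∂(volume.restrict X), 0 < μ x := hw.2
  have hgm : AEMeasurable g (volume.restrict X) :=
    (hg.continuousOn).aemeasurable hX.measurableSet
  have hmeas : AEMeasurable (fun x => ‖g x‖ ^ 2 * μ x) (volume.restrict X) :=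
    ((hgm.norm.pow_const 2)).mul hw.1.aemeasurable
  by_cases hItop : I = ⊤
  · rw [hItop, ENNReal.mul_top]
    · exact le_top
    · simp only [ne_eq, ENNReal.ofReal_eq_zero, not_le]
      exact lt_of_lt_of_le zero_lt_one (le_max_right C 1)
  · -- I < ∞, so g ∈ A²
    have haeeq : ∀ᵐ x ∂(volume.restrict X),
        ENNReal.ofReal (‖g x‖ ^ 2 * μ x) = ENNReal.ofReal (‖g x‖ ^ 2) * ENNReal.ofReal (μ x) := by
      filter_upwards with x
      exact ENNReal.ofReal_mul (by positivity)
    have hint : IntegrableOn (fun x => ‖g x‖ ^ 2 * μ x) X volume := by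
      refine ⟨hmeas.aestronglyMeasurable, ?_⟩
      rw [hasFiniteIntegral_iff_norm]
      have : ∀ᵐ x ∂(volume.restrict X),
          ENNReal.ofReal ‖‖g x‖ ^ 2 * μ x‖ = ENNReal.ofReal (‖g x‖ ^ 2) * ENNReal.ofReal (μ x) := by
        filter_upwards [hpos] with x hx
        rw [Real.norm_eq_abs, abs_of_nonneg (by positivity)]
        exact ENNReal.ofReal_mul (by positivity)
      rw [lintegral_congr_ae this]
      exact lt_of_le_of_ne le_top hItop
    have hb := hC g ⟨hg, hint⟩ z hz
    have hnn : 0 ≤ normSqA2 X μ g := by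
      apply integral_nonneg_of_ae
      filter_upwards [hpos] with x hx
      positivity
    have hb2 : ‖g z‖ ^ 2 ≤ max C 1 * normSqA2 X μ g :=
      hb.trans (mul_le_mul_of_nonneg_right (le_max_left C 1) hnn)
    calc ENNReal.ofReal (‖g z‖ ^ 2)
        ≤ ENNReal.ofReal (max C 1 * normSqA2 X μ g) := ENNReal.ofReal_le_ofReal hb2
      _ = ENNReal.ofReal (max C 1) * ENNReal.ofReal (normSqA2 X μ g) :=
          ENNReal.ofReal_mul (le_trans zero_le_one (le_max_right C 1))
      _ = ENNReal.ofReal (max C 1) * I := by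
          have h0 : 0 ≤ᵐ[volume.restrict X] fun x => ‖g x‖ ^ 2 * μ x := by
            filter_upwards [hpos] with x hx
            positivity
          rw [normSqA2, ofReal_integral_eq_lintegral_ofReal hint h0, lintegral_congr_ae haeeq]

/-- if the weights `φ₁`, `φ₂` on open sets `X₁ ⊆ ℂⁿ`, `X₂ ⊆ ℂᵐ` satisfy the
evaluation bound, then so does the product weight `φ₁φ₂` on `X₁ × X₂`. -/
theorem product_weight_evaluation_bound {n m : ℕ}
    (X₁ : Set (Fin n → ℂ)) (X₂ : Set (Fin m → ℂ))
    (hX₁ : IsOpen X₁) (hX₂ : IsOpen X₂)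
    (φ₁ : (Fin n → ℂ) → ℝ) (φ₂ : (Fin m → ℂ) → ℝ)
    (hw₁ : IsWeight X₁ φ₁) (hw₂ : IsWeight X₂ φ₂)
    (he₁ : EvalBound X₁ φ₁) (he₂ : EvalBound X₂ φ₂)
    (Y₁ : Set (Fin n → ℂ)) (hY₁ : Y₁ ⊆ X₁) (hY₁c : IsCompact Y₁)
    (Y₂ : Set (Fin m → ℂ)) (hY₂ : Y₂ ⊆ X₂) (hY₂c : IsCompact Y₂) :
    ∃ C : ℝ, ∀ f : (Fin n → ℂ) × (Fin m → ℂ) → ℂ,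
      MemA2 (X₁ ×ˢ X₂) (prodWeight φ₁ φ₂) f →
      ∀ z₁ ∈ Y₁, ∀ z₂ ∈ Y₂,
        ‖f (z₁, z₂)‖ ^ 2 ≤ C * normSqA2 (X₁ ×ˢ X₂) (prodWeight φ₁ φ₂) f := by
  obtain ⟨C₁, hC₁⟩ := he₁ Y₁ hY₁ hY₁c
  obtain ⟨C₂, hC₂⟩ := he₂ Y₂ hY₂ hY₂c
  refine ⟨max C₁ 1 * max C₂ 1, ?_⟩
  intro f hf z₁ hz₁ z₂ hz₂
  have hz₂X : z₂ ∈ X₂ := hY₂ hz₂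
  have hS : MeasurableSet (X₁ ×ˢ X₂) := (hX₁.prod hX₂).measurableSet
  have hvol : (volume : Measure ((Fin n → ℂ) × (Fin m → ℂ))).restrict (X₁ ×ˢ X₂)
      = (volume.restrict X₁).prod (volume.restrict X₂) := by
    rw [Measure.volume_eq_prod, Measure.prod_restrict]
  -- a.e. positivity of the weights on the product
  have h1 : ∀ᵐ p ∂((volume.restrict X₁).prod (volume.restrict X₂)), 0 < φ₁ p.1 := by
    rw [ae_iff]
    have hset : {p : (Fin n → ℂ) × (Fin m → ℂ) | ¬ 0 < φ₁ p.1}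
        = {x | ¬ 0 < φ₁ x} ×ˢ Set.univ := by ext p; simp
    have h0 := hw₁.2
    rw [ae_iff] at h0
    rw [hset, Measure.prod_prod, h0, zero_mul]
  have h2 : ∀ᵐ p ∂((volume.restrict X₁).prod (volume.restrict X₂)), 0 < φ₂ p.2 := by
    rw [ae_iff]
    have hset : {p : (Fin n → ℂ) × (Fin m → ℂ) | ¬ 0 < φ₂ p.2}
        = Set.univ ×ˢ {y | ¬ 0 < φ₂ y} := by ext p; simp
    have h0 := hw₂.2
    rw [ae_iff] at h0
    rw [hset, Measure.prod_prod, h0, mul_zero]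
  have haepos : ∀ᵐ p ∂((volume : Measure ((Fin n → ℂ) × (Fin m → ℂ))).restrict (X₁ ×ˢ X₂)),
      0 < φ₁ p.1 ∧ 0 < φ₂ p.2 := by
    rw [hvol]; exact h1.and h2
  -- measurability
  have hfm : AEMeasurable f (volume.restrict (X₁ ×ˢ X₂)) :=
    hf.1.continuousOn.aemeasurable hS
  have hfm' : AEMeasurable f ((volume.restrict X₁).prod (volume.restrict X₂)) := by
    rwa [← hvol]
  set F : ((Fin n → ℂ) × (Fin m → ℂ)) → ENNReal :=
    fun p => ENNReal.ofReal (‖f p‖ ^ 2) * ENNReal.ofReal (φ₂ p.2) * ENNReal.ofReal (φ₁ p.1)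
    with hFdef
  have hF : AEMeasurable F ((volume.restrict X₁).prod (volume.restrict X₂)) := by
    refine (((hfm'.norm.pow_const 2).ennreal_ofReal).mul ?_).mul ?_
    · exact (ENNReal.measurable_ofReal.comp (hw₂.1.comp measurable_snd)).aemeasurable
    · exact (ENNReal.measurable_ofReal.comp (hw₁.1.comp measurable_fst)).aemeasurable
  -- Step A : evaluation in the first variable
  have hg₂ : DifferentiableOn ℂ (fun x => f (x, z₂)) X₁ := by
    exact hf.1.comp ((differentiable_id.prodMk (differentiable_const _)).differentiableOn)
      (fun x hx => ⟨hx, hz₂X⟩)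
  have hA := key_lintegral_bound X₁ hX₁ φ₁ hw₁ Y₁ C₁ hC₁ _ hg₂ hz₁
  -- Step B : evaluation in the second variable, integrated
  have hBC : (∫⁻ x in X₁, ENNReal.ofReal (‖f (x, z₂)‖ ^ 2) * ENNReal.ofReal (φ₁ x)) ≤
      ENNReal.ofReal (max C₂ 1) * ∫⁻ x in X₁,
        (∫⁻ y in X₂, ENNReal.ofReal (‖f (x, y)‖ ^ 2) * ENNReal.ofReal (φ₂ y))
          * ENNReal.ofReal (φ₁ x) := by
    rw [← lintegral_const_mul' _ _ ENNReal.ofReal_ne_top]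
    apply setLIntegral_mono' hX₁.measurableSet
    intro x hx
    have hgx : DifferentiableOn ℂ (fun y => f (x, y)) X₂ :=
      hf.1.comp (((differentiable_const _).prodMk differentiable_id).differentiableOn)
        (fun y hy => ⟨hx, hy⟩)
    have hkey := key_lintegral_bound X₂ hX₂ φ₂ hw₂ Y₂ C₂ hC₂ _ hgx hz₂
    calc ENNReal.ofReal (‖f (x, z₂)‖ ^ 2) * ENNReal.ofReal (φ₁ x)
        ≤ (ENNReal.ofReal (max C₂ 1) *
            ∫⁻ y in X₂, ENNReal.ofReal (‖f (x, y)‖ ^ 2) * ENNReal.ofReal (φ₂ y))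
            * ENNReal.ofReal (φ₁ x) := mul_le_mul_left hkey _
      _ = ENNReal.ofReal (max C₂ 1) *
            ((∫⁻ y in X₂, ENNReal.ofReal (‖f (x, y)‖ ^ 2) * ENNReal.ofReal (φ₂ y))
              * ENNReal.ofReal (φ₁ x)) := by ring
  -- Tonelli
  have hT : (∫⁻ x in X₁,
        (∫⁻ y in X₂, ENNReal.ofReal (‖f (x, y)‖ ^ 2) * ENNReal.ofReal (φ₂ y))
          * ENNReal.ofReal (φ₁ x))
      = ∫⁻ p in X₁ ×ˢ X₂, F p := by
    rw [hvol, lintegral_prod F hF]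
    refine lintegral_congr fun x => ?_
    rw [← lintegral_mul_const' _ _ ENNReal.ofReal_ne_top]
  -- identify with the Bergman norm
  have hnorm : (∫⁻ p in X₁ ×ˢ X₂, F p)
      = ENNReal.ofReal (normSqA2 (X₁ ×ˢ X₂) (prodWeight φ₁ φ₂) f) := by
    have h0 : 0 ≤ᵐ[(volume : Measure ((Fin n → ℂ) × (Fin m → ℂ))).restrict (X₁ ×ˢ X₂)]
        fun p => ‖f p‖ ^ 2 * prodWeight φ₁ φ₂ p := by
      filter_upwards [haepos] with p hp
      have := hp.1
      have := hp.2
      simp only [prodWeight]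
      positivity
    rw [normSqA2, ofReal_integral_eq_lintegral_ofReal hf.2 h0]
    refine lintegral_congr_ae ?_
    filter_upwards [haepos] with p hp
    simp only [hFdef, prodWeight]
    rw [ENNReal.ofReal_mul (by positivity), ENNReal.ofReal_mul hp.1.le]
    ring
  -- combine
  have hnn : 0 ≤ normSqA2 (X₁ ×ˢ X₂) (prodWeight φ₁ φ₂) f := by
    apply integral_nonneg_of_ae
    filter_upwards [haepos] with p hp
    have := hp.1
    have := hp.2
    simp only [prodWeight]
    positivity
  have chain : ENNReal.ofReal (‖f (z₁, z₂)‖ ^ 2) ≤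
      ENNReal.ofReal (max C₁ 1) * (ENNReal.ofReal (max C₂ 1) *
        ENNReal.ofReal (normSqA2 (X₁ ×ˢ X₂) (prodWeight φ₁ φ₂) f)) := by
    refine hA.trans (mul_le_mul_right ?_ _)
    refine hBC.trans (le_of_eq ?_)
    rw [hT, hnorm]
  have hc₁ : (0:ℝ) ≤ max C₁ 1 := le_trans zero_le_one (le_max_right _ _)
  have hc₂ : (0:ℝ) ≤ max C₂ 1 := le_trans zero_le_one (le_max_right _ _)
  rw [← ENNReal.ofReal_mul hc₂, ← ENNReal.ofReal_mul hc₁] at chain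
  rw [mul_assoc]
  exact (ENNReal.ofReal_le_ofReal_iff
    (mul_nonneg hc₁ (mul_nonneg hc₂ hnn))).1 chain
end
end

section
/- Let X₁ ⊆ ℂ^n and X₂ ⊆ ℂ^m be open sets, and let φ₁ and φ₂ be weights on X₁ and X₂ respectively, each satisfying the evaluation bound. Then every f ∈ A²(X₁×X₂, φ₁φ₂) has all slices square-integrable: for every ζ ∈ X₁ the function u ↦ f(ζ,u) belongs to A²(X₂,φ₂), and for every w ∈ X₂ the function z ↦ f(z,w) belongs to A²(X₁,φ₁). -/
open MeasureTheory

noncomputable section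

private lemma slice_memA2 {n m : ℕ}
    (X₁ : Set (Fin n → ℂ)) (X₂ : Set (Fin m → ℂ))
    (hX₂ : IsOpen X₂)
    (φ₁ : (Fin n → ℂ) → ℝ) (φ₂ : (Fin m → ℂ) → ℝ)
    (hw₁ : IsWeight X₁ φ₁) (hw₂ : IsWeight X₂ φ₂)
    (he₁ : EvalBound X₁ φ₁)
    (f : (Fin n → ℂ) × (Fin m → ℂ) → ℂ)
    (hf : MemA2 (X₁ ×ˢ X₂) (prodWeight φ₁ φ₂) f)
    (ζ : Fin n → ℂ) (hζ : ζ ∈ X₁) :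
    MemA2 X₂ φ₂ (fun u => f (ζ, u)) := by
  have hdiff2 : DifferentiableOn ℂ (fun u => f (ζ, u)) X₂ :=
    hf.1.comp ((differentiable_const ζ).prodMk differentiable_id).differentiableOn
      (fun u hu => ⟨hζ, hu⟩)
  have hdiff1 : ∀ u ∈ X₂, DifferentiableOn ℂ (fun z => f (z, u)) X₁ := fun u hu =>
    hf.1.comp (differentiable_id.prodMk (differentiable_const u)).differentiableOn
      (fun z hz => ⟨hz, hu⟩)
  refine ⟨hdiff2, ?_⟩
  set G : (Fin n → ℂ) × (Fin m → ℂ) → ℝ := fun p => ‖f p‖ ^ 2 * (φ₁ p.1 * φ₂ p.2) with hG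
  have hInt : Integrable G ((volume.restrict X₁).prod (volume.restrict X₂)) := by
    rw [Measure.prod_restrict]
    exact hf.2
  have hslice : ∀ᵐ u ∂(volume.restrict X₂),
      Integrable (fun z => G (z, u)) (volume.restrict X₁) := hInt.prod_left_ae
  have hIbar : Integrable (fun u => ∫ z, G (z, u) ∂(volume.restrict X₁))
      (volume.restrict X₂) := hInt.integral_prod_right
  obtain ⟨C, hC⟩ := he₁ {ζ} (Set.singleton_subset_iff.mpr hζ) isCompact_singleton
  set C' : ℝ := max C 0 with hC'
  have key : ∀ᵐ u ∂(volume.restrict X₂),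
      ‖f (ζ, u)‖ ^ 2 * φ₂ u ≤ C' * ∫ z, G (z, u) ∂(volume.restrict X₁) ∧
      0 ≤ ‖f (ζ, u)‖ ^ 2 * φ₂ u := by
    filter_upwards [hslice, hw₂.2, ae_restrict_mem hX₂.measurableSet] with u hint hpos hu
    have h0 : φ₂ u ≠ 0 := ne_of_gt hpos
    have hfun : (fun z => ‖f (z, u)‖ ^ 2 * φ₁ z) = fun z => G (z, u) * (φ₂ u)⁻¹ := by
      funext z; field_simp [hG]; ring
    have hint' : Integrable (fun z => ‖f (z, u)‖ ^ 2 * φ₁ z) (volume.restrict X₁) := by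
      rw [hfun]; exact hint.mul_const _
    have hmem : MemA2 X₁ φ₁ (fun z => f (z, u)) := ⟨hdiff1 u hu, hint'⟩
    have hev := hC _ hmem ζ rfl
    have hIeq : (∫ z, G (z, u) ∂(volume.restrict X₁)) =
        (∫ z, ‖f (z, u)‖ ^ 2 * φ₁ z ∂(volume.restrict X₁)) * φ₂ u := by
      rw [← integral_mul_const]
      exact integral_congr_ae (Filter.Eventually.of_forall fun z => by simp [hG]; ring)
    have hInonneg : 0 ≤ ∫ z, ‖f (z, u)‖ ^ 2 * φ₁ z ∂(volume.restrict X₁) := by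
      refine integral_nonneg_of_ae ?_
      filter_upwards [hw₁.2] with z hz
      positivity
    constructor
    · have h1 : ‖f (ζ, u)‖ ^ 2 * φ₂ u ≤
          (C * ∫ z, ‖f (z, u)‖ ^ 2 * φ₁ z ∂(volume.restrict X₁)) * φ₂ u :=
        mul_le_mul_of_nonneg_right hev hpos.le
      have h2 : (C * ∫ z, ‖f (z, u)‖ ^ 2 * φ₁ z ∂(volume.restrict X₁)) * φ₂ u ≤
          (C' * ∫ z, ‖f (z, u)‖ ^ 2 * φ₁ z ∂(volume.restrict X₁)) * φ₂ u :=
        mul_le_mul_of_nonneg_right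
          (mul_le_mul_of_nonneg_right (le_max_left C 0) hInonneg) hpos.le
      calc ‖f (ζ, u)‖ ^ 2 * φ₂ u ≤ _ := h1
        _ ≤ _ := h2
        _ = C' * ∫ z, G (z, u) ∂(volume.restrict X₁) := by rw [hIeq]; ring
    · positivity
  have hmeas : AEStronglyMeasurable (fun u => ‖f (ζ, u)‖ ^ 2 * φ₂ u)
      (volume.restrict X₂) := by
    have hcont : ContinuousOn (fun u => ‖f (ζ, u)‖ ^ 2) X₂ :=
      (hdiff2.continuousOn.norm).pow 2
    exact (hcont.aestronglyMeasurable hX₂.measurableSet).mul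
      hw₂.1.aestronglyMeasurable.restrict
  refine Integrable.mono' (hIbar.const_mul C') hmeas ?_
  filter_upwards [key] with u hu
  rw [Real.norm_of_nonneg hu.2]
  exact hu.1

/-- every `f ∈ A²(X₁×X₂, φ₁φ₂)` has all slices square-integrable:
`u ↦ f(ζ,u) ∈ A²(X₂,φ₂)` for every `ζ ∈ X₁`, and `z ↦ f(z,w) ∈ A²(X₁,φ₁)` for every
`w ∈ X₂`. -/
theorem slices_of_product_A2 {n m : ℕ}
    (X₁ : Set (Fin n → ℂ)) (X₂ : Set (Fin m → ℂ))
    (hX₁ : IsOpen X₁) (hX₂ : IsOpen X₂)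
    (φ₁ : (Fin n → ℂ) → ℝ) (φ₂ : (Fin m → ℂ) → ℝ)
    (hw₁ : IsWeight X₁ φ₁) (hw₂ : IsWeight X₂ φ₂)
    (he₁ : EvalBound X₁ φ₁) (he₂ : EvalBound X₂ φ₂)
    (f : (Fin n → ℂ) × (Fin m → ℂ) → ℂ)
    (hf : MemA2 (X₁ ×ˢ X₂) (prodWeight φ₁ φ₂) f) :
    (∀ ζ ∈ X₁, MemA2 X₂ φ₂ (fun u => f (ζ, u))) ∧
    (∀ w ∈ X₂, MemA2 X₁ φ₁ (fun z => f (z, w))) := by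
  constructor
  · intro ζ hζ
    exact slice_memA2 X₁ X₂ hX₂ φ₁ φ₂ hw₁ hw₂ he₁ f hf ζ hζ
  · intro w hw
    have hswap : MemA2 (X₂ ×ˢ X₁) (prodWeight φ₂ φ₁) (fun p => f (p.2, p.1)) := by
      constructor
      · exact hf.1.comp (differentiable_snd.prodMk differentiable_fst).differentiableOn
          (fun p hp => ⟨hp.2, hp.1⟩)
      · have h := hf.2
        rw [IntegrableOn, Measure.volume_eq_prod, ← Measure.prod_restrict] at h
        have h2 := h.swap
        rw [IntegrableOn, Measure.volume_eq_prod, ← Measure.prod_restrict]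
        have hfun : (fun p : (Fin m → ℂ) × (Fin n → ℂ) =>
            ‖f (p.2, p.1)‖ ^ 2 * prodWeight φ₂ φ₁ p) =
            (fun x => ‖f x‖ ^ 2 * prodWeight φ₁ φ₂ x) ∘ Prod.swap := by
          funext p
          simp only [Function.comp_apply, Prod.swap, prodWeight]
          ring
        exact hfun ▸ h2
    exact slice_memA2 X₂ X₁ hX₁ φ₂ φ₁ hw₂ hw₁ he₂ (fun p => f (p.2, p.1)) hswap w hw
end
end

section
/- Let X₁ ⊆ ℂ^n and X₂ ⊆ ℂ^m be open sets, and let φ₁ and φ₂ be weights on X₁ and X₂ respectively, each satisfying the evaluation bound. For i = 1,2 suppose K_i : X_i × X_i → ℂ is a function such that for every z ∈ X_i the function ζ ↦ K_i(ζ,z) belongs to A²(X_i,φ_i), and such that the reproducing property holds: f(z) = ∫_{X_i} f(ζ)·conj(K_i(ζ,z))·φ_i(ζ) dλ(ζ) for every f ∈ A²(X_i,φ_i) and every z ∈ X_i. Then for every (z,w) ∈ X₁×X₂ the function (ζ,u) ↦ K₁(ζ,z)·K₂(u,w) belongs to A²(X₁×X₂, φ₁φ₂), and for every f ∈ A²(X₁×X₂,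 φ₁φ₂) one has f(z,w) = ∫_{X₁×X₂} f(ζ,u)·conj(K₁(ζ,z)·K₂(u,w))·φ₁(ζ)φ₂(u) dλ(ζ,u). In other words, the weighted Bergman kernel of X₁×X₂ with weight φ₁φ₂ decomposes as the product of the weighted Bergman kernels: B_{X₁×X₂, φ₁φ₂}((ζ,u),(conj z, conj w)) = B_{X₁,φ₁}(ζ, conj z)·B_{X₂,φ₂}(u, conj w). -/
open MeasureTheory

noncomputable section

/-- if `K₁`, `K₂` are reproducing (Bergman) kernels of `A²(X₁,φ₁)` and
`A²(X₂,φ₂)`, then `(ζ,u) ↦ K₁(ζ,z)·K₂(u,w)` is the reproducing (Bergman) kernel of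
`A²(X₁×X₂, φ₁φ₂)`. -/
theorem bergman_kernel_product_decomposition {n m : ℕ}
    (X₁ : Set (Fin n → ℂ)) (X₂ : Set (Fin m → ℂ))
    (hX₁ : IsOpen X₁) (hX₂ : IsOpen X₂)
    (φ₁ : (Fin n → ℂ) → ℝ) (φ₂ : (Fin m → ℂ) → ℝ)
    (hw₁ : IsWeight X₁ φ₁) (hw₂ : IsWeight X₂ φ₂)
    (he₁ : EvalBound X₁ φ₁) (he₂ : EvalBound X₂ φ₂)
    (K₁ : (Fin n → ℂ) → (Fin n → ℂ) → ℂ) (K₂ : (Fin m → ℂ) → (Fin m → ℂ) → ℂ)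
    (hK₁mem : ∀ z ∈ X₁, MemA2 X₁ φ₁ (fun ζ => K₁ ζ z))
    (hK₂mem : ∀ w ∈ X₂, MemA2 X₂ φ₂ (fun u => K₂ u w))
    (hK₁rep : ∀ f : (Fin n → ℂ) → ℂ, MemA2 X₁ φ₁ f → ∀ z ∈ X₁,
      f z = ∫ ζ in X₁, f ζ * (starRingEnd ℂ) (K₁ ζ z) * (φ₁ ζ : ℂ))
    (hK₂rep : ∀ g : (Fin m → ℂ) → ℂ, MemA2 X₂ φ₂ g → ∀ w ∈ X₂,
      g w = ∫ u in X₂, g u * (starRingEnd ℂ) (K₂ u w) * (φ₂ u : ℂ)) :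
    ∀ z ∈ X₁, ∀ w ∈ X₂,
      MemA2 (X₁ ×ˢ X₂) (prodWeight φ₁ φ₂) (fun p => K₁ p.1 z * K₂ p.2 w) ∧
      ∀ f : (Fin n → ℂ) × (Fin m → ℂ) → ℂ, MemA2 (X₁ ×ˢ X₂) (prodWeight φ₁ φ₂) f →
        f (z, w) = ∫ p in X₁ ×ˢ X₂,
          f p * (starRingEnd ℂ) (K₁ p.1 z * K₂ p.2 w) * ((φ₁ p.1 * φ₂ p.2 : ℝ) : ℂ) := by
  intro z hz w hw
  obtain ⟨hφ₁meas, hφ₁pos⟩ := hw₁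
  obtain ⟨hφ₂meas, hφ₂pos⟩ := hw₂
  have hXopen : IsOpen (X₁ ×ˢ X₂) := hX₁.prod hX₂
  have hXmeas : MeasurableSet (X₁ ×ˢ X₂) := hXopen.measurableSet
  have hprodmeas : (volume : Measure ((Fin n → ℂ) × (Fin m → ℂ))).restrict (X₁ ×ˢ X₂)
      = (volume.restrict X₁).prod (volume.restrict X₂) := by
    rw [MeasureTheory.Measure.volume_eq_prod, Measure.prod_restrict]
  have hK1 := hK₁mem z hz
  have hK2 := hK₂mem w hw
  -- differentiability of the product kernel
  have hKdiff : DifferentiableOn ℂ (fun p : (Fin n → ℂ) × (Fin m → ℂ) => K₁ p.1 z * K₂ p.2 w)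
      (X₁ ×ˢ X₂) := by
    exact (hK1.1.comp differentiable_fst.differentiableOn (fun p hp => hp.1)).mul
      (hK2.1.comp differentiable_snd.differentiableOn (fun p hp => hp.2))
  -- integrability of the product kernel
  have hKint : Integrable
      (fun p : (Fin n → ℂ) × (Fin m → ℂ) => ‖K₁ p.1 z * K₂ p.2 w‖ ^ 2 * prodWeight φ₁ φ₂ p)
      ((volume.restrict X₁).prod (volume.restrict X₂)) := by
    have h := hK1.2.mul_prod hK2.2
    refine h.congr (Filter.Eventually.of_forall fun p => ?_)
    simp only [prodWeight, norm_mul, mul_pow]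
    ring
  have hKmem : MemA2 (X₁ ×ˢ X₂) (prodWeight φ₁ φ₂)
      (fun p => K₁ p.1 z * K₂ p.2 w) := by
    refine ⟨hKdiff, ?_⟩
    rw [IntegrableOn, hprodmeas]
    exact hKint
  refine ⟨hKmem, ?_⟩
  intro f hf
  have hfint : Integrable (fun p => ‖f p‖ ^ 2 * prodWeight φ₁ φ₂ p)
      ((volume.restrict X₁).prod (volume.restrict X₂)) := by
    rw [← hprodmeas]; exact hf.2
  -- a.e. slices of f lie in A²(X₁, φ₁)
  have hslice := hfint.prod_left_ae
  have hsliceA2 : ∀ᵐ u ∂(volume.restrict X₂), MemA2 X₁ φ₁ (fun ζ => f (ζ, u)) := by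
    filter_upwards [hslice, ae_restrict_mem hX₂.measurableSet, hφ₂pos] with u hu huX hupos
    refine ⟨?_, ?_⟩
    · exact hf.1.comp ((differentiable_id.prodMk (differentiable_const u)).differentiableOn)
        (fun ζ hζ => Set.mk_mem_prod hζ huX)
    · have h2 := hu.mul_const (φ₂ u)⁻¹
      refine h2.congr (Filter.Eventually.of_forall fun ζ => ?_)
      simp only [prodWeight]
      field_simp
  obtain ⟨C, hC⟩ := he₁ {z} (Set.singleton_subset_iff.2 hz) isCompact_singleton
  -- the function u ↦ f(z,u) lies in A²(X₂, φ₂)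
  have hgdiff : DifferentiableOn ℂ (fun u => f (z, u)) X₂ :=
    hf.1.comp (((differentiable_const z).prodMk differentiable_id).differentiableOn)
      (fun u hu => Set.mk_mem_prod hz hu)
  have hIint : Integrable
      (fun u => ∫ ζ, ‖f (ζ, u)‖ ^ 2 * prodWeight φ₁ φ₂ (ζ, u) ∂(volume.restrict X₁))
      (volume.restrict X₂) := hfint.integral_prod_right
  have hgint : IntegrableOn (fun u => ‖f (z, u)‖ ^ 2 * φ₂ u) X₂ volume := by
    refine Integrable.mono' (hIint.const_mul C) ?_ ?_
    · exact (((hgdiff.continuousOn.norm).pow 2).aestronglyMeasurable hX₂.measurableSet).mul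
        (hφ₂meas.aestronglyMeasurable.restrict)
    · filter_upwards [hsliceA2, hφ₂pos] with u hu hupos
      have hb := hC _ hu z rfl
      have hInt : (∫ ζ, ‖f (ζ, u)‖ ^ 2 * prodWeight φ₁ φ₂ (ζ, u) ∂(volume.restrict X₁))
          = (∫ ζ in X₁, ‖f (ζ, u)‖ ^ 2 * φ₁ ζ) * φ₂ u := by
        rw [← integral_mul_const]
        congr 1
        funext ζ
        simp only [prodWeight]
        ring
      have hns : normSqA2 X₁ φ₁ (fun ζ => f (ζ, u)) = ∫ ζ in X₁, ‖f (ζ, u)‖ ^ 2 * φ₁ ζ := rfl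
      rw [Real.norm_of_nonneg (by positivity), hInt]
      calc ‖f (z, u)‖ ^ 2 * φ₂ u ≤ (C * normSqA2 X₁ φ₁ (fun ζ => f (ζ, u))) * φ₂ u := by
            exact mul_le_mul_of_nonneg_right hb hupos.le
        _ = C * ((∫ ζ in X₁, ‖f (ζ, u)‖ ^ 2 * φ₁ ζ) * φ₂ u) := by rw [hns]; ring
  have hgA2 : MemA2 X₂ φ₂ (fun u => f (z, u)) := ⟨hgdiff, hgint⟩
  -- step 1: reproduce in the second variable
  have step1 : f (z, w) = ∫ u in X₂, f (z, u) * (starRingEnd ℂ) (K₂ u w) * (φ₂ u : ℂ) :=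
    hK₂rep _ hgA2 w hw
  -- the full integrand
  set G : (Fin n → ℂ) × (Fin m → ℂ) → ℂ :=
    fun p => f p * (starRingEnd ℂ) (K₁ p.1 z * K₂ p.2 w) * ((φ₁ p.1 * φ₂ p.2 : ℝ) : ℂ) with hG
  -- step 2: a.e. rewrite the inner value via the first kernel
  have step2 : ∀ᵐ u ∂(volume.restrict X₂),
      f (z, u) * (starRingEnd ℂ) (K₂ u w) * (φ₂ u : ℂ)
        = ∫ ζ in X₁, G (ζ, u) := by
    filter_upwards [hsliceA2] with u hu
    have hrep := hK₁rep _ hu z hz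
    rw [hrep, ← integral_mul_const, ← integral_mul_const]
    congr 1
    funext ζ
    simp only [hG, map_mul]
    push_cast
    ring
  -- integrability of G on the product
  have hGint : Integrable G ((volume.restrict X₁).prod (volume.restrict X₂)) := by
    have hfm : AEStronglyMeasurable f ((volume.restrict X₁).prod (volume.restrict X₂)) := by
      rw [← hprodmeas]
      exact hf.1.continuousOn.aestronglyMeasurable hXmeas
    have hKm : AEStronglyMeasurable
        (fun p : (Fin n → ℂ) × (Fin m → ℂ) => (starRingEnd ℂ) (K₁ p.1 z * K₂ p.2 w))
        ((volume.restrict X₁).prod (volume.restrict X₂)) := by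
      rw [← hprodmeas]
      exact (continuous_star.comp_continuousOn hKdiff.continuousOn).aestronglyMeasurable hXmeas
    have hφm : AEStronglyMeasurable
        (fun p : (Fin n → ℂ) × (Fin m → ℂ) => ((φ₁ p.1 * φ₂ p.2 : ℝ) : ℂ))
        ((volume.restrict X₁).prod (volume.restrict X₂)) :=
      (Complex.measurable_ofReal.comp
        ((hφ₁meas.comp measurable_fst).mul (hφ₂meas.comp measurable_snd))).aestronglyMeasurable
    have hφ₁ae : ∀ᵐ p ∂((volume.restrict X₁).prod (volume.restrict X₂)), 0 < φ₁ p.1 :=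
      Measure.quasiMeasurePreserving_fst.ae hφ₁pos
    have hφ₂ae : ∀ᵐ p ∂((volume.restrict X₁).prod (volume.restrict X₂)), 0 < φ₂ p.2 :=
      Measure.quasiMeasurePreserving_snd.ae hφ₂pos
    refine Integrable.mono' (((hfint.add hKint).div_const 2)) ((hfm.mul hKm).mul hφm) ?_
    filter_upwards [hφ₁ae, hφ₂ae] with p h1 h2
    have hnorm : ‖G p‖ = ‖f p‖ * ‖K₁ p.1 z * K₂ p.2 w‖ * (φ₁ p.1 * φ₂ p.2) := by
      simp only [hG, norm_mul, RCLike.norm_conj, Complex.norm_real,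
        Real.norm_of_nonneg h1.le, Real.norm_of_nonneg h2.le]
    rw [hnorm]
    simp only [prodWeight, Pi.add_apply]
    have hmul : (0:ℝ) ≤ φ₁ p.1 * φ₂ p.2 := by positivity
    nlinarith [sq_nonneg (‖f p‖ - ‖K₁ p.1 z * K₂ p.2 w‖), norm_nonneg (f p),
      norm_nonneg (K₁ p.1 z * K₂ p.2 w),
      mul_nonneg (sq_nonneg (‖f p‖ - ‖K₁ p.1 z * K₂ p.2 w‖)) hmul]
  -- conclude by Fubini
  calc f (z, w) = ∫ u in X₂, f (z, u) * (starRingEnd ℂ) (K₂ u w) * (φ₂ u : ℂ) := step1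
    _ = ∫ u in X₂, ∫ ζ in X₁, G (ζ, u) := integral_congr_ae step2
    _ = ∫ p, G p ∂((volume.restrict X₁).prod (volume.restrict X₂)) :=
        (integral_prod_symm G hGint).symm
    _ = ∫ p in X₁ ×ˢ X₂, G p := by rw [hprodmeas]
end
end

section
/- Let X₁ ⊆ ℂ^n and X₂ ⊆ ℂ^m be open sets, and let φ₁ and φ₂ be weights on X₁ and X₂ respectively, each satisfying the evaluation bound. Let {f_i}_{i∈ℕ} be a family in A²(X₁,φ₁) that is orthonormal (⟨f_i,f_j⟩_{X₁,φ₁} = 1 if i = j and 0 otherwise) and complete (every g ∈ A²(X₁,φ₁) with ⟨g,f_i⟩_{X₁,φ₁} = 0 for all i is identically zero), and let {g_j}_{j∈ℕ} be an orthonormal and complete family in A²(X₂,φ₂). Then the family {(z,w) ↦ f_i(z)·g_j(w)}_{i,j∈ℕ} is orthonormal in A²(X₁×X₂, φ₁φ₂) and complete: every h ∈ A²(X₁×X₂, φ₁φ₂) with ∫_{X₁×X₂} h(z,w)·conj(f_i(z)g_j(w))·φ₁(z)φ₂(w) dλ = 0 for all i,j is identically zero. -/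
open MeasureTheory

noncomputable section

open Metric Topology Filter

private lemma sqrtAMGM {x y : ℝ} (hx : 0 ≤ x) : Real.sqrt x * y ≤ (x + y ^ 2) / 2 := by
  nlinarith [Real.sq_sqrt hx, Real.sqrt_nonneg x, sq_nonneg (Real.sqrt x - y)]

private lemma cs_integral {α : Type*} [MeasurableSpace α] (μ : Measure α) {f g : α → ℝ}
    (hf0 : 0 ≤ᵐ[μ] f) (hg0 : 0 ≤ᵐ[μ] g)
    (hfm : AEStronglyMeasurable f μ) (hgm : AEStronglyMeasurable g μ)
    (hf2 : Integrable (fun x => f x ^ 2) μ) (hg2 : Integrable (fun x => g x ^ 2) μ) :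
    ∫ x, f x * g x ∂μ ≤ Real.sqrt (∫ x, f x ^ 2 ∂μ) * Real.sqrt (∫ x, g x ^ 2 ∂μ) := by
  set A := ∫ x, f x ^ 2 ∂μ with hAdef
  set B := ∫ x, g x ^ 2 ∂μ with hBdef
  have hA : 0 ≤ A := integral_nonneg fun x => sq_nonneg _
  have hB : 0 ≤ B := integral_nonneg fun x => sq_nonneg _
  have hfg_int : Integrable (fun x => f x * g x) μ := by
    refine Integrable.mono' (((hf2.add hg2).div_const 2)) (hfm.mul hgm) ?_
    filter_upwards [hf0, hg0] with x hfx hgx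
    simp only [Pi.zero_apply] at hfx hgx
    rw [Real.norm_eq_abs, abs_of_nonneg (mul_nonneg hfx hgx)]
    simp only [Pi.add_apply]
    nlinarith [sq_nonneg (f x - g x)]
  have key : ∀ t : ℝ, 0 < t → ∫ x, f x * g x ∂μ ≤ (t * A + B / t) / 2 := by
    intro t ht
    have hle : ∀ᵐ x ∂μ, f x * g x ≤ (t * f x ^ 2 + g x ^ 2 / t) / 2 := by
      filter_upwards [hf0, hg0] with x hfx hgx
      have h2 : f x * g x ≤ (t ^ 2 * f x ^ 2 + g x ^ 2) / (2 * t) := by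
        rw [le_div_iff₀ (by positivity)]; nlinarith [sq_nonneg (t * f x - g x)]
      refine h2.trans (le_of_eq ?_)
      field_simp
    have hint2 : Integrable (fun x => (t * f x ^ 2 + g x ^ 2 / t) / 2) μ :=
      ((hf2.const_mul t).add (hg2.div_const t)).div_const 2
    refine (integral_mono_ae hfg_int hint2 hle).trans (le_of_eq ?_)
    rw [integral_div, integral_add (hf2.const_mul t) (hg2.div_const t),
      integral_const_mul, integral_div]
  rcases eq_or_lt_of_le hA with hA0 | hApos
  · have hf_zero : (fun x => f x ^ 2) =ᵐ[μ] 0 :=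
      (integral_eq_zero_iff_of_nonneg_ae (Filter.Eventually.of_forall fun x => sq_nonneg _) hf2).1
        hA0.symm
    have hz : (fun x => f x * g x) =ᵐ[μ] 0 := by
      filter_upwards [hf_zero] with x hx
      have : f x = 0 := by
        have := pow_eq_zero_iff (n := 2) (by norm_num) |>.1 hx
        exact this
      simp [this]
    rw [integral_congr_ae hz]
    simpa using mul_nonneg (Real.sqrt_nonneg A) (Real.sqrt_nonneg B)
  · rcases eq_or_lt_of_le hB with hB0 | hBpos
    · have hg_zero : (fun x => g x ^ 2) =ᵐ[μ] 0 :=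
        (integral_eq_zero_iff_of_nonneg_ae (Filter.Eventually.of_forall fun x => sq_nonneg _) hg2).1
          hB0.symm
      have hz : (fun x => f x * g x) =ᵐ[μ] 0 := by
        filter_upwards [hg_zero] with x hx
        have : g x = 0 := pow_eq_zero_iff (n := 2) (by norm_num) |>.1 hx
        simp [this]
      rw [integral_congr_ae hz]
      simpa using mul_nonneg (Real.sqrt_nonneg A) (Real.sqrt_nonneg B)
    · have hsA : 0 < Real.sqrt A := Real.sqrt_pos.2 hApos
      have hsB : 0 < Real.sqrt B := Real.sqrt_pos.2 hBpos
      have ht : 0 < Real.sqrt B / Real.sqrt A := div_pos hsB hsA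
      refine (key _ ht).trans (le_of_eq ?_)
      have eA : Real.sqrt A * Real.sqrt A = A := Real.mul_self_sqrt hA
      have eB : Real.sqrt B * Real.sqrt B = B := Real.mul_self_sqrt hB
      field_simp
      nlinarith [eA, eB, hsA, hsB]

private lemma ae_fst' {α β : Type*} [MeasurableSpace α] [MeasurableSpace β]
    {μ : Measure α} {ν : Measure β} [SFinite ν] {P : α → Prop}
    (hm : MeasurableSet {x | ¬ P x}) (h : ∀ᵐ x ∂μ, P x) :
    ∀ᵐ p ∂μ.prod ν, P p.1 := by
  rw [ae_iff] at h ⊢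
  have hset : {p : α × β | ¬P p.1} = {x | ¬ P x} ×ˢ Set.univ := by
    ext ⟨a, b⟩; simp
  rw [hset, Measure.prod_prod, h, zero_mul]

private lemma ae_snd' {α β : Type*} [MeasurableSpace α] [MeasurableSpace β]
    {μ : Measure α} {ν : Measure β} [SFinite ν] {P : β → Prop}
    (hm : MeasurableSet {x | ¬ P x}) (h : ∀ᵐ x ∂ν, P x) :
    ∀ᵐ p ∂μ.prod ν, P p.2 := by
  rw [ae_iff] at h ⊢
  have hset : {p : α × β | ¬P p.2} = Set.univ ×ˢ {x | ¬ P x} := by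
    ext ⟨a, b⟩; simp
  rw [hset, Measure.prod_prod, h, mul_zero]

private lemma lip_of_bounded {E : Type*} [NormedAddCommGroup E] [NormedSpace ℂ E]
    {u : E → ℂ} {z₀ : E} {r B : ℝ} (hr : 0 < r) (hB : 0 ≤ B)
    (hd : DifferentiableOn ℂ u (ball z₀ (2 * r)))
    (hb : ∀ z ∈ ball z₀ (2 * r), ‖u z‖ ≤ B)
    {z z' : E} (hz : z ∈ ball z₀ (r / 2)) (hz' : z' ∈ ball z₀ (r / 2)) :
    ‖u z - u z'‖ ≤ 3 * B / r * ‖z - z'‖ := by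
  have hsub : ball z₀ (r / 2) ⊆ ball z₀ (2 * r) := ball_subset_ball (by linarith)
  rcases eq_or_ne z z' with rfl | hne
  · simp
  rcases eq_or_lt_of_le hB with hB0 | hBpos
  · have h1 : u z = 0 := norm_le_zero_iff.1 (by rw [hB0]; exact hb z (hsub hz))
    have h2 : u z' = 0 := norm_le_zero_iff.1 (by rw [hB0]; exact hb z' (hsub hz'))
    rw [h1, h2, sub_zero, norm_zero]
    positivity
  · set δ := ‖z - z'‖ with hδdef
    have hδpos : 0 < δ := norm_sub_pos_iff.2 hne
    have hδr : δ < r := by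
      have h1 : dist z z₀ < r / 2 := mem_ball.1 hz
      have h2 : dist z₀ z' < r / 2 := by rw [dist_comm]; exact mem_ball.1 hz'
      have := dist_triangle z z₀ z'
      rw [hδdef, ← dist_eq_norm]
      linarith
    set q : ℂ → ℂ := fun t => u (z' + t • (z - z')) with hqdef
    have hmaps0 : ∀ t : ℂ, t ∈ ball (0 : ℂ) (r / δ) → z' + t • (z - z') ∈ ball z₀ (2 * r) := by
      intro t ht
      have htn : ‖t‖ < r / δ := by simpa [mem_ball, dist_zero_right] using ht
      have he : z' + t • (z - z') - z₀ = (z' - z₀) + t • (z - z') := by abel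
      have h1 : ‖z' + t • (z - z') - z₀‖ ≤ ‖z' - z₀‖ + ‖t‖ * δ := by
        rw [he]
        refine (norm_add_le _ _).trans ?_
        rw [norm_smul]
      have h2 : ‖z' - z₀‖ < r / 2 := by
        rw [← dist_eq_norm]; exact mem_ball.1 hz'
      have h3 : ‖t‖ * δ < r := by
        calc ‖t‖ * δ < r / δ * δ := mul_lt_mul_of_pos_right htn hδpos
          _ = r := by field_simp
      rw [mem_ball, dist_eq_norm]
      linarith
    have hdq : DifferentiableOn ℂ q (ball 0 (r / δ)) := by
      refine hd.comp ?_ fun t ht => hmaps0 t ht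
      exact ((differentiable_id.smul_const (z - z')).const_add z').differentiableOn
    have hq0 : q 0 = u z' := by simp [hqdef]
    have hmaps : Set.MapsTo q (ball 0 (r / δ)) (ball (q 0) (3 * B)) := by
      intro t ht
      have hqt : ‖q t‖ ≤ B := hb _ (hmaps0 t ht)
      have hq0n : ‖q 0‖ ≤ B := by
        rw [hq0]; exact hb z' (hsub hz')
      rw [mem_ball]
      calc dist (q t) (q 0) ≤ ‖q t‖ + ‖q 0‖ := dist_le_norm_add_norm _ _
        _ ≤ B + B := add_le_add hqt hq0n
        _ < 3 * B := by linarith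
    have h1mem : (1 : ℂ) ∈ ball (0 : ℂ) (r / δ) := by
      simp only [mem_ball, dist_zero_right, norm_one]
      rw [lt_div_iff₀ hδpos, one_mul]
      exact hδr
    have hkey := Complex.dist_le_div_mul_dist_of_mapsTo_ball hdq (hmaps.mono_right ball_subset_closedBall) h1mem
    have hq1 : q 1 = u z := by simp [hqdef]
    have hd10 : dist (1 : ℂ) 0 = 1 := by simp
    rw [hq1, hq0, hd10, mul_one] at hkey
    calc ‖u z - u z'‖ = dist (u z) (u z') := (dist_eq_norm _ _).symm
      _ ≤ 3 * B / (r / δ) := hkey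
      _ = 3 * B / r * δ := by field_simp

set_option maxHeartbeats 1000000 in
private lemma key_diff {n m : ℕ} {X₁ : Set (Fin n → ℂ)} {X₂ : Set (Fin m → ℂ)}
    (hX₁ : IsOpen X₁) (hX₂ : IsOpen X₂)
    {φ₁ : (Fin n → ℂ) → ℝ} {φ₂ : (Fin m → ℂ) → ℝ}
    (hw₁ : IsWeight X₁ φ₁) (hw₂ : IsWeight X₂ φ₂) (he₁ : EvalBound X₁ φ₁)
    {h : (Fin n → ℂ) × (Fin m → ℂ) → ℂ}
    (hdiff : DifferentiableOn ℂ h (X₁ ×ˢ X₂))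
    (hint : Integrable (fun p : (Fin n → ℂ) × (Fin m → ℂ) => ‖h p‖ ^ 2 * (φ₁ p.1 * φ₂ p.2))
      (((volume : Measure (Fin n → ℂ)).restrict X₁).prod
        ((volume : Measure (Fin m → ℂ)).restrict X₂)))
    {g : (Fin m → ℂ) → ℂ} (hg : MemA2 X₂ φ₂ g)
    {z₀ : Fin n → ℂ} (hz₀ : z₀ ∈ X₁) :
    Integrable (fun w => h (z₀, w) * ((starRingEnd ℂ) (g w) * (φ₂ w : ℂ)))
      ((volume : Measure (Fin m → ℂ)).restrict X₂) ∧
    DifferentiableAt ℂ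
      (fun z => ∫ w in X₂, h (z, w) * ((starRingEnd ℂ) (g w) * (φ₂ w : ℂ))) z₀ := by
  have hX₂m : MeasurableSet X₂ := hX₂.measurableSet
  have hphi1 := hw₁.2
  have hphi2 := hw₂.2
  have hopen : IsOpen (X₁ ×ˢ X₂) := hX₁.prod hX₂
  have hcont : ContinuousOn h (X₁ ×ˢ X₂) := hdiff.continuousOn
  -- continuity of slices in w
  have hcontW : ∀ z ∈ X₁, ContinuousOn (fun w => h (z, w)) X₂ := fun z hz =>
    hcont.comp (Continuous.continuousOn (by fun_prop)) fun w hw => ⟨hz, hw⟩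
  -- holomorphy of slices in z
  have hholW : ∀ w ∈ X₂, DifferentiableOn ℂ (fun z => h (z, w)) X₁ := fun w hw =>
    hdiff.comp (differentiableOn_id.prodMk (differentiableOn_const w))
      fun z hz => ⟨hz, hw⟩
  -- a.e. slice membership
  have hmemW : ∀ᵐ w ∂(volume.restrict X₂), MemA2 X₁ φ₁ (fun z => h (z, w)) := by
    filter_upwards [hint.prod_left_ae, ae_restrict_mem hX₂m, hphi2] with w hw hw2 hpos
    refine ⟨hholW w hw2, ?_⟩
    have he : (fun z => ‖h (z, w)‖ ^ 2 * φ₁ z)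
        = fun z => (φ₂ w)⁻¹ * (‖h (z, w)‖ ^ 2 * (φ₁ z * φ₂ w)) := by
      funext z
      field_simp
    rw [IntegrableOn, he]
    exact hw.const_mul _
  obtain ⟨F, hFeq⟩ : ∃ F : (Fin m → ℂ) → ℝ,
      ∀ w, F w = normSqA2 X₁ φ₁ (fun z => h (z, w)) :=
    ⟨fun w => normSqA2 X₁ φ₁ (fun z => h (z, w)), fun _ => rfl⟩
  have hF0 : ∀ w, 0 ≤ F w := fun w => by
    rw [hFeq]
    exact integral_nonneg_of_ae (hphi1.mono fun z hz => mul_nonneg (by positivity) hz.le)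
  have hFint : Integrable (fun w => F w * φ₂ w) (volume.restrict X₂) := by
    have h1 := hint.integral_prod_right
    refine h1.congr (Filter.Eventually.of_forall fun w => ?_)
    calc ∫ z, ‖h (z, w)‖ ^ 2 * (φ₁ z * φ₂ w) ∂(volume.restrict X₁)
        = ∫ z, (‖h (z, w)‖ ^ 2 * φ₁ z) * φ₂ w ∂(volume.restrict X₁) := by
          congr 1; funext z; ring
      _ = F w * φ₂ w := by rw [hFeq]; exact integral_mul_const _ _
  -- radius
  obtain ⟨ε, hε, hball⟩ := Metric.isOpen_iff.1 hX₁ z₀ hz₀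
  obtain ⟨r, hr, hball2, hK⟩ : ∃ r : ℝ, 0 < r ∧ ball z₀ (2 * r) ⊆ X₁ ∧
      closedBall z₀ (2 * r) ⊆ X₁ := by
    refine ⟨ε / 5, by positivity, ?_, ?_⟩
    · exact (ball_subset_ball (by linarith)).trans hball
    · exact (closedBall_subset_ball (by linarith)).trans hball
  have hnormSq0 : ∀ u : (Fin n → ℂ) → ℂ, 0 ≤ normSqA2 X₁ φ₁ u := fun u =>
    integral_nonneg_of_ae (hphi1.mono fun z hz => mul_nonneg (by positivity) hz.le)
  obtain ⟨C, hC, hCbound⟩ : ∃ C : ℝ, 0 ≤ C ∧ ∀ u, MemA2 X₁ φ₁ u →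
      ∀ z ∈ closedBall z₀ (2 * r), ‖u z‖ ≤ Real.sqrt (C * normSqA2 X₁ φ₁ u) := by
    obtain ⟨C₀, hC₀⟩ := he₁ (closedBall z₀ (2 * r)) hK (isCompact_closedBall _ _)
    refine ⟨max C₀ 0, le_max_right _ _, fun u hu z hzK => ?_⟩
    rw [show ‖u z‖ = Real.sqrt (‖u z‖ ^ 2) by rw [Real.sqrt_sq (norm_nonneg _)]]
    refine Real.sqrt_le_sqrt ?_
    exact (hC₀ u hu z hzK).trans (mul_le_mul_of_nonneg_right (le_max_left _ _) (hnormSq0 u))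
  have hgood : ∀ᵐ w ∂(volume.restrict X₂),
      (∀ z ∈ closedBall z₀ (2 * r), ‖h (z, w)‖ ≤ Real.sqrt (C * F w)) ∧ 0 ≤ φ₂ w ∧ w ∈ X₂ := by
    filter_upwards [hmemW, hphi2, ae_restrict_mem hX₂m] with w h1 h2 h3
    refine ⟨fun z hzK => ?_, h2.le, h3⟩
    rw [hFeq]
    exact hCbound _ h1 z hzK
  set bnd : (Fin m → ℂ) → ℝ :=
    fun w => Real.sqrt C * ((F w + ‖g w‖ ^ 2) / 2) * φ₂ w with hbnddef
  have hbnd_int : Integrable bnd (volume.restrict X₂) := by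
    have he : bnd = fun w => Real.sqrt C / 2 * (F w * φ₂ w + ‖g w‖ ^ 2 * φ₂ w) := by
      funext w
      rw [hbnddef]
      ring
    rw [he]
    exact (hFint.add hg.2).const_mul _
  have hB2 : ∀ w, 0 ≤ φ₂ w → Real.sqrt (C * F w) * (‖g w‖ * φ₂ w) ≤ bnd w := by
    intro w hw2
    rw [Real.sqrt_mul hC, hbnddef]
    have h1 : Real.sqrt (F w) * ‖g w‖ ≤ (F w + ‖g w‖ ^ 2) / 2 := sqrtAMGM (hF0 w)
    have h2 : 0 ≤ Real.sqrt C := Real.sqrt_nonneg C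
    have h4 : Real.sqrt C * (Real.sqrt (F w) * ‖g w‖) * φ₂ w
        ≤ Real.sqrt C * ((F w + ‖g w‖ ^ 2) / 2) * φ₂ w :=
      mul_le_mul_of_nonneg_right (mul_le_mul_of_nonneg_left h1 h2) hw2
    calc Real.sqrt C * Real.sqrt (F w) * (‖g w‖ * φ₂ w)
        = Real.sqrt C * (Real.sqrt (F w) * ‖g w‖) * φ₂ w := by ring
      _ ≤ Real.sqrt C * ((F w + ‖g w‖ ^ 2) / 2) * φ₂ w := h4
  -- norm of the multiplier
  have hcw : ∀ w, 0 ≤ φ₂ w → ‖(starRingEnd ℂ) (g w) * (φ₂ w : ℂ)‖ = ‖g w‖ * φ₂ w := by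
    intro w hw2
    rw [norm_mul, RCLike.norm_conj, Complex.norm_real, Real.norm_eq_abs, abs_of_nonneg hw2]
  -- measurability of integrands
  have hgc : ContinuousOn g X₂ := hg.1.continuousOn
  have hdmeas : ∀ z ∈ X₁, AEStronglyMeasurable
      (fun w => h (z, w) * ((starRingEnd ℂ) (g w) * (φ₂ w : ℂ))) (volume.restrict X₂) := by
    intro z hz
    refine (((hcontW z hz).aestronglyMeasurable hX₂m).mul (AEStronglyMeasurable.mul ?_ ?_))
    · exact (hgc.star.aestronglyMeasurable hX₂m)
    · exact (Complex.continuous_ofReal.measurable.comp hw₂.1).aestronglyMeasurable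
  have hptbound : ∀ᵐ w ∂(volume.restrict X₂), ∀ z ∈ closedBall z₀ (2 * r),
      ‖h (z, w) * ((starRingEnd ℂ) (g w) * (φ₂ w : ℂ))‖ ≤ bnd w := by
    filter_upwards [hgood] with w hw
    obtain ⟨hw1, hw2, -⟩ := hw
    intro z hzK
    rw [norm_mul, hcw w hw2]
    refine le_trans (mul_le_mul_of_nonneg_right (hw1 z hzK)
      (mul_nonneg (norm_nonneg _) hw2)) (hB2 w hw2)
  have hint_z₀ : Integrable (fun w => h (z₀, w) * ((starRingEnd ℂ) (g w) * (φ₂ w : ℂ)))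
      (volume.restrict X₂) := by
    refine Integrable.mono' hbnd_int (hdmeas z₀ hz₀) ?_
    filter_upwards [hptbound] with w hw
    exact hw z₀ (mem_closedBall_self (by linarith))
  refine ⟨hint_z₀, ?_⟩
  -- partial derivative family
  obtain ⟨pD, hsliceDiff⟩ : ∃ pD : (Fin m → ℂ) → ((Fin n → ℂ) →L[ℂ] ℂ),
      ∀ w ∈ X₂, HasFDerivAt (fun z => h (z, w)) (pD w) z₀ := by
    refine ⟨fun w => (fderiv ℂ h (z₀, w)).comp
      (ContinuousLinearMap.inl ℂ (Fin n → ℂ) (Fin m → ℂ)), fun w hw => ?_⟩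
    have hhd : DifferentiableAt ℂ h (z₀, w) := hdiff.differentiableAt (hopen.mem_nhds ⟨hz₀, hw⟩)
    exact hhd.hasFDerivAt.comp z₀ (hasFDerivAt_prodMk_left z₀ w)
  -- measurability of pD
  have hpDmeas : AEStronglyMeasurable pD (volume.restrict X₂) := by
    set A : (Fin n → ℂ) → ((Fin n → ℂ) →L[ℂ] ℂ) := fun c =>
      ∑ k : Fin n, c k • (ContinuousLinearMap.proj k : (Fin n → ℂ) →L[ℂ] ℂ) with hAdef
    have hAcont : Continuous A := by
      apply continuous_finset_sum
      intro k _
      exact (continuous_apply k).smul continuous_const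
    have hArepr : ∀ D : (Fin n → ℂ) →L[ℂ] ℂ, A (fun k => D ((Pi.single k 1 : Fin n → ℂ))) = D := by
      intro D
      ext v
      simp only [hAdef, ContinuousLinearMap.coe_sum', Finset.sum_apply,
        ContinuousLinearMap.smul_apply, ContinuousLinearMap.proj_apply, smul_eq_mul]
      have hsingle_smul : ∀ (k : Fin n) (c : ℂ), c • (Pi.single k 1 : Fin n → ℂ) = Pi.single k c := by
        intro k c
        funext i
        rcases eq_or_ne i k with rfl | hik
        · simp
        · simp [Pi.single_eq_of_ne hik]
      have hv : v = ∑ k : Fin n, v k • (Pi.single k 1 : Fin n → ℂ) := by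
        simp_rw [hsingle_smul]
        exact (Finset.univ_sum_single v).symm
      conv_rhs => rw [hv]
      rw [map_sum]
      refine Finset.sum_congr rfl fun k _ => ?_
      rw [_root_.map_smul, smul_eq_mul]
      ring
    set M : ℕ := ⌈1 / r⌉₊ + 1 with hMdef
    have hMr : ∀ mm : ℕ, (((mm + M : ℕ) : ℝ))⁻¹ < r := by
      intro mm
      have h1 : 1 / r < (M : ℝ) := by
        have h0 := Nat.le_ceil (1 / r)
        rw [hMdef]
        push_cast
        linarith
      have h3 : (0 : ℝ) < ((mm + M : ℕ) : ℝ) := by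
        push_cast
        have : (0:ℝ) ≤ (mm : ℝ) := Nat.cast_nonneg mm
        linarith [div_nonneg (zero_le_one) hr.le]
      have h4 : 1 / r < ((mm + M : ℕ) : ℝ) := by
        push_cast
        have : (0:ℝ) ≤ (mm : ℝ) := Nat.cast_nonneg mm
        push_cast at h1
        linarith
      have h5 := (div_lt_iff₀ hr).1 h4
      rw [inv_eq_one_div, div_lt_iff₀ h3, mul_comm]
      exact h5
    have hnz : ∀ mm : ℕ, ((mm + M : ℕ) : ℂ) ≠ 0 := by
      intro mm
      have : 0 < mm + M := by positivity
      exact Nat.cast_ne_zero.2 this.ne'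
    have hsingle_norm : ∀ k : Fin n, ‖(Pi.single k 1 : Fin n → ℂ)‖ ≤ 1 := by
      intro k
      refine (pi_norm_le_iff_of_nonneg zero_le_one).2 fun i => ?_
      rcases eq_or_ne i k with rfl | hik
      · simp
      · simp [Pi.single_eq_of_ne hik]
    have hpt_mem : ∀ (mm : ℕ) (k : Fin n),
        z₀ + (((mm + M : ℕ) : ℂ))⁻¹ • (Pi.single k 1 : Fin n → ℂ) ∈ X₁ := by
      intro mm k
      apply hball2
      rw [mem_ball, dist_eq_norm]
      have : ‖z₀ + (((mm + M : ℕ) : ℂ))⁻¹ • (Pi.single k 1 : Fin n → ℂ) - z₀‖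
          = ‖(((mm + M : ℕ) : ℂ))⁻¹‖ * ‖(Pi.single k 1 : Fin n → ℂ)‖ := by
        rw [add_sub_cancel_left, norm_smul]
      rw [this]
      have h5 : ‖(((mm + M : ℕ) : ℂ))⁻¹‖ = (((mm + M : ℕ) : ℝ))⁻¹ := by
        rw [norm_inv, Complex.norm_natCast]
      rw [h5]
      have h6 := hMr mm
      have h7 := hsingle_norm k
      have h8 : (0:ℝ) ≤ (((mm + M : ℕ) : ℝ))⁻¹ := by positivity
      nlinarith
    set seq : ℕ → (Fin m → ℂ) → ((Fin n → ℂ) →L[ℂ] ℂ) := fun mm w =>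
      A (fun k => ((mm + M : ℕ) : ℂ) •
        (h (z₀ + (((mm + M : ℕ) : ℂ))⁻¹ • (Pi.single k 1 : Fin n → ℂ), w) - h (z₀, w))) with hseqdef
    have hseqmeas : ∀ mm, AEStronglyMeasurable (seq mm) (volume.restrict X₂) := by
      intro mm
      refine (hAcont.comp_continuousOn ?_).aestronglyMeasurable hX₂m
      refine continuousOn_pi.2 fun k => ?_
      exact continuousOn_const.fun_smul ((hcontW _ (hpt_mem mm k)).sub (hcontW z₀ hz₀))
    have hseqlim : ∀ᵐ w ∂(volume.restrict X₂),
        Filter.Tendsto (fun mm => seq mm w) Filter.atTop (𝓝 (pD w)) := by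
      filter_upwards [ae_restrict_mem hX₂m] with w hw
      have hD := hsliceDiff w hw
      have hcnorm : Filter.Tendsto (fun mm : ℕ => ‖((mm + M : ℕ) : ℂ)‖)
          Filter.atTop Filter.atTop := by
        have he : (fun mm : ℕ => ‖((mm + M : ℕ) : ℂ)‖) = fun mm : ℕ => ((mm + M : ℕ) : ℝ) := by
          funext mm
          rw [Complex.norm_natCast]
        rw [he]
        exact tendsto_natCast_atTop_atTop.comp (tendsto_add_atTop_nat M)
      have hcomp : ∀ k : Fin n, Filter.Tendsto
          (fun mm : ℕ => ((mm + M : ℕ) : ℂ) •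
            (h (z₀ + (((mm + M : ℕ) : ℂ))⁻¹ • (Pi.single k 1 : Fin n → ℂ), w) - h (z₀, w)))
          Filter.atTop (𝓝 (pD w ((Pi.single k 1 : Fin n → ℂ)))) := by
        intro k
        exact hD.lim ((Pi.single k 1 : Fin n → ℂ)) hcnorm
      have hto : Filter.Tendsto (fun mm => seq mm w) Filter.atTop
          (𝓝 (A (fun k => pD w ((Pi.single k 1 : Fin n → ℂ))))) :=
        (hAcont.tendsto _).comp (tendsto_pi_nhds.2 fun k => hcomp k)
      rwa [hArepr (pD w)] at hto
    exact aestronglyMeasurable_of_tendsto_ae Filter.atTop hseqmeas hseqlim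
  -- assemble derivative data
  set F' : (Fin m → ℂ) → ((Fin n → ℂ) →L[ℂ] ℂ) := fun w =>
    ((starRingEnd ℂ) (g w) * (φ₂ w : ℂ)) • pD w with hF'def
  have hF'meas : AEStronglyMeasurable F' (volume.restrict X₂) := by
    refine AEStronglyMeasurable.fun_smul (AEStronglyMeasurable.fun_mul ?_ ?_) hpDmeas
    · exact (hgc.star.aestronglyMeasurable hX₂m)
    · exact (Complex.continuous_ofReal.measurable.comp hw₂.1).aestronglyMeasurable
  have hdiffae : ∀ᵐ w ∂(volume.restrict X₂), HasFDerivAt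
      (fun z => h (z, w) * ((starRingEnd ℂ) (g w) * (φ₂ w : ℂ))) (F' w) z₀ := by
    filter_upwards [ae_restrict_mem hX₂m] with w hw
    exact (hsliceDiff w hw).mul_const _
  have hlip : ∀ᵐ w ∂(volume.restrict X₂), ∀ z ∈ ball z₀ (r / 2),
      ‖h (z, w) * ((starRingEnd ℂ) (g w) * (φ₂ w : ℂ))
        - h (z₀, w) * ((starRingEnd ℂ) (g w) * (φ₂ w : ℂ))‖ ≤ (3 / r * bnd w) * ‖z - z₀‖ := by
    filter_upwards [hgood] with w hw
    obtain ⟨hw1, hw2, hw3⟩ := hw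
    intro z hz
    have hz₀b : z₀ ∈ ball z₀ (r / 2) := mem_ball_self (by positivity)
    have hlz := lip_of_bounded hr (Real.sqrt_nonneg (C * F w))
      ((hholW w hw3).mono hball2)
      (fun z' hz' => hw1 z' (ball_subset_closedBall hz')) hz hz₀b
    rw [← sub_mul, norm_mul, hcw w hw2]
    calc ‖h (z, w) - h (z₀, w)‖ * (‖g w‖ * φ₂ w)
        ≤ (3 * Real.sqrt (C * F w) / r * ‖z - z₀‖) * (‖g w‖ * φ₂ w) := by
          exact mul_le_mul_of_nonneg_right hlz (mul_nonneg (norm_nonneg _) hw2)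
      _ = 3 / r * (Real.sqrt (C * F w) * (‖g w‖ * φ₂ w)) * ‖z - z₀‖ := by ring
      _ ≤ (3 / r * bnd w) * ‖z - z₀‖ := by
          have h6 := hB2 w hw2
          have h3r : (0:ℝ) ≤ 3 / r := div_nonneg (by norm_num) hr.le
          exact mul_le_mul_of_nonneg_right
            (mul_le_mul_of_nonneg_left h6 h3r) (norm_nonneg _)
  have hFmeas : ∀ z ∈ ball z₀ (r / 2), AEStronglyMeasurable
      (fun w => h (z, w) * ((starRingEnd ℂ) (g w) * (φ₂ w : ℂ))) (volume.restrict X₂) :=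
    fun z hz => hdmeas z (hball2 (ball_subset_ball (by linarith) hz))
  have hmain := hasFDerivAt_integral_of_dominated_loc_of_lip'
    (F := fun z w => h (z, w) * ((starRingEnd ℂ) (g w) * (φ₂ w : ℂ)))
    (F' := F') (bound := fun w => 3 / r * bnd w)
    (ball_mem_nhds z₀ (half_pos hr)) hFmeas hint_z₀ hF'meas hlip
    (hbnd_int.const_mul _) hdiffae
  exact hmain.2.differentiableAt

set_option maxHeartbeats 2000000

/-- the products of complete orthonormal bases of `A²(X₁,φ₁)` and `A²(X₂,φ₂)`
form a complete orthonormal family in `A²(X₁×X₂, φ₁φ₂)`. -/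
theorem product_complete_orthonormal_basis {n m : ℕ}
    (X₁ : Set (Fin n → ℂ)) (X₂ : Set (Fin m → ℂ))
    (hX₁ : IsOpen X₁) (hX₂ : IsOpen X₂)
    (φ₁ : (Fin n → ℂ) → ℝ) (φ₂ : (Fin m → ℂ) → ℝ)
    (hw₁ : IsWeight X₁ φ₁) (hw₂ : IsWeight X₂ φ₂)
    (he₁ : EvalBound X₁ φ₁) (he₂ : EvalBound X₂ φ₂)
    (f : ℕ → (Fin n → ℂ) → ℂ) (g : ℕ → (Fin m → ℂ) → ℂ)
    (hfmem : ∀ i, MemA2 X₁ φ₁ (f i))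
    (hfon : ∀ i j, innerA2 X₁ φ₁ (f i) (f j) = if i = j then 1 else 0)
    (hfcomp : ∀ h : (Fin n → ℂ) → ℂ, MemA2 X₁ φ₁ h →
      (∀ i, innerA2 X₁ φ₁ h (f i) = 0) → ∀ z ∈ X₁, h z = 0)
    (hgmem : ∀ j, MemA2 X₂ φ₂ (g j))
    (hgon : ∀ i j, innerA2 X₂ φ₂ (g i) (g j) = if i = j then 1 else 0)
    (hgcomp : ∀ h : (Fin m → ℂ) → ℂ, MemA2 X₂ φ₂ h →
      (∀ j, innerA2 X₂ φ₂ h (g j) = 0) → ∀ w ∈ X₂, h w = 0) :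
    (∀ i j, MemA2 (X₁ ×ˢ X₂) (prodWeight φ₁ φ₂) (fun p => f i p.1 * g j p.2)) ∧
    (∀ i j i' j', innerA2 (X₁ ×ˢ X₂) (prodWeight φ₁ φ₂)
        (fun p => f i p.1 * g j p.2) (fun p => f i' p.1 * g j' p.2)
      = if i = i' ∧ j = j' then 1 else 0) ∧
    (∀ h : (Fin n → ℂ) × (Fin m → ℂ) → ℂ, MemA2 (X₁ ×ˢ X₂) (prodWeight φ₁ φ₂) h →
      (∀ i j, innerA2 (X₁ ×ˢ X₂) (prodWeight φ₁ φ₂) h (fun p => f i p.1 * g j p.2) = 0) →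
      ∀ p ∈ X₁ ×ˢ X₂, h p = 0) := by
  have hX₁m : MeasurableSet X₁ := hX₁.measurableSet
  have hX₂m : MeasurableSet X₂ := hX₂.measurableSet
  have hphi1 := hw₁.2
  have hphi2 := hw₂.2
  have hres : (volume : Measure ((Fin n → ℂ) × (Fin m → ℂ))).restrict (X₁ ×ˢ X₂)
      = ((volume : Measure (Fin n → ℂ)).restrict X₁).prod
        ((volume : Measure (Fin m → ℂ)).restrict X₂) := by
    rw [Measure.volume_eq_prod, Measure.prod_restrict]
  have hfc : ∀ i, ContinuousOn (f i) X₁ := fun i => (hfmem i).1.continuousOn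
  have hgc : ∀ j, ContinuousOn (g j) X₂ := fun j => (hgmem j).1.continuousOn
  -- Part 1
  have hmemprod : ∀ i j, MemA2 (X₁ ×ˢ X₂) (prodWeight φ₁ φ₂)
      (fun p => f i p.1 * g j p.2) := by
    intro i j
    constructor
    · exact ((hfmem i).1.comp differentiable_fst.differentiableOn fun p hp => hp.1).mul
        ((hgmem j).1.comp differentiable_snd.differentiableOn fun p hp => hp.2)
    · have he : (fun p : (Fin n → ℂ) × (Fin m → ℂ) =>
          ‖f i p.1 * g j p.2‖ ^ 2 * prodWeight φ₁ φ₂ p)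
          = fun p => (‖f i p.1‖ ^ 2 * φ₁ p.1) * (‖g j p.2‖ ^ 2 * φ₂ p.2) := by
        funext p
        simp only [prodWeight, norm_mul, mul_pow]
        ring
      rw [IntegrableOn, he, hres]
      exact (hfmem i).2.mul_prod (hgmem j).2
  -- Part 2
  have horthprod : ∀ i j i' j', innerA2 (X₁ ×ˢ X₂) (prodWeight φ₁ φ₂)
      (fun p => f i p.1 * g j p.2) (fun p => f i' p.1 * g j' p.2)
      = if i = i' ∧ j = j' then 1 else 0 := by
    intro i j i' j'
    have he : (fun p : (Fin n → ℂ) × (Fin m → ℂ) =>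
        (f i p.1 * g j p.2) * (starRingEnd ℂ) (f i' p.1 * g j' p.2)
          * ((prodWeight φ₁ φ₂ p : ℝ) : ℂ))
        = fun p => (f i p.1 * (starRingEnd ℂ) (f i' p.1) * ((φ₁ p.1 : ℝ) : ℂ)) *
            (g j p.2 * (starRingEnd ℂ) (g j' p.2) * ((φ₂ p.2 : ℝ) : ℂ)) := by
      funext p
      simp only [prodWeight, map_mul, Complex.ofReal_mul]
      ring
    have hpm := integral_prod_mul (μ := (volume : Measure (Fin n → ℂ)).restrict X₁)
      (ν := (volume : Measure (Fin m → ℂ)).restrict X₂)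
      (f := fun z => f i z * (starRingEnd ℂ) (f i' z) * ((φ₁ z : ℝ) : ℂ))
      (g := fun w => g j w * (starRingEnd ℂ) (g j' w) * ((φ₂ w : ℝ) : ℂ))
    rw [innerA2, he, hres, hpm]
    have e1 : (∫ z, f i z * (starRingEnd ℂ) (f i' z) * ((φ₁ z : ℝ) : ℂ)
          ∂((volume : Measure (Fin n → ℂ)).restrict X₁))
        = innerA2 X₁ φ₁ (f i) (f i') := rfl
    have e2 : (∫ w, g j w * (starRingEnd ℂ) (g j' w) * ((φ₂ w : ℝ) : ℂ)
          ∂((volume : Measure (Fin m → ℂ)).restrict X₂))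
        = innerA2 X₂ φ₂ (g j) (g j') := rfl
    rw [e1, e2, hfon, hgon]
    by_cases h1 : i = i' <;> by_cases h2 : j = j' <;> simp [h1, h2]
  refine ⟨hmemprod, horthprod, ?_⟩
  -- Part 3
  intro h hmem horth
  obtain ⟨hdiff, hint0⟩ := hmem
  have hcont : ContinuousOn h (X₁ ×ˢ X₂) := hdiff.continuousOn
  have hopen : IsOpen (X₁ ×ˢ X₂) := hX₁.prod hX₂
  have hint : Integrable (fun p : (Fin n → ℂ) × (Fin m → ℂ) => ‖h p‖ ^ 2 * (φ₁ p.1 * φ₂ p.2))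
      (((volume : Measure (Fin n → ℂ)).restrict X₁).prod
        ((volume : Measure (Fin m → ℂ)).restrict X₂)) := by
    rw [← hres]
    exact hint0
  have hcontW : ∀ z ∈ X₁, ContinuousOn (fun w => h (z, w)) X₂ := fun z hz =>
    hcont.comp (Continuous.continuousOn (by fun_prop)) fun w hw => ⟨hz, hw⟩
  have hholZ : ∀ z ∈ X₁, DifferentiableOn ℂ (fun w => h (z, w)) X₂ := fun z hz =>
    hdiff.comp ((differentiableOn_const z).prodMk differentiableOn_id) fun w hw => ⟨hz, hw⟩
  have hmemZ : ∀ᵐ z ∂(volume.restrict X₁), MemA2 X₂ φ₂ (fun w => h (z, w)) := by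
    filter_upwards [hint.prod_right_ae, ae_restrict_mem hX₁m, hphi1] with z hz hz1 hpos
    refine ⟨hholZ z hz1, ?_⟩
    have he : (fun w => ‖h (z, w)‖ ^ 2 * φ₂ w)
        = fun w => (φ₁ z)⁻¹ * (‖h (z, w)‖ ^ 2 * (φ₁ z * φ₂ w)) := by
      funext w
      field_simp
    rw [IntegrableOn, he]
    exact hz.const_mul _
  have hGint : Integrable (fun z => (normSqA2 X₂ φ₂ (fun w => h (z, w))) * φ₁ z)
      (volume.restrict X₁) := by
    have h1 := hint.integral_prod_left
    refine h1.congr (Filter.Eventually.of_forall fun z => ?_)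
    calc ∫ w, ‖h (z, w)‖ ^ 2 * (φ₁ z * φ₂ w) ∂(volume.restrict X₂)
        = ∫ w, (‖h (z, w)‖ ^ 2 * φ₂ w) * φ₁ z ∂(volume.restrict X₂) := by
          congr 1
          funext w
          ring
      _ = _ := integral_mul_const _ _
  have hgnorm : ∀ j, normSqA2 X₂ φ₂ (g j) = 1 := by
    intro j
    have h1 : innerA2 X₂ φ₂ (g j) (g j) = 1 := by simpa using hgon j j
    have h2 : innerA2 X₂ φ₂ (g j) (g j) = ((normSqA2 X₂ φ₂ (g j) : ℝ) : ℂ) := by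
      calc innerA2 X₂ φ₂ (g j) (g j)
          = ∫ w in X₂, ((‖g j w‖ ^ 2 * φ₂ w : ℝ) : ℂ) := by
            rw [innerA2]
            refine integral_congr_ae (Filter.Eventually.of_forall fun w => ?_)
            beta_reduce
            rw [Complex.mul_conj, Complex.ofReal_mul]
            congr 1
            rw [Complex.normSq_eq_norm_sq]
        _ = ((normSqA2 X₂ φ₂ (g j) : ℝ) : ℂ) := integral_ofReal
    rw [h2] at h1
    exact_mod_cast h1
  -- the functions d j
  set d : ℕ → (Fin n → ℂ) → ℂ := fun j z =>
    ∫ w in X₂, h (z, w) * ((starRingEnd ℂ) (g j w) * ((φ₂ w : ℝ) : ℂ)) with hddef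
  have hkey : ∀ (j : ℕ) (z₀ : Fin n → ℂ), z₀ ∈ X₁ →
      Integrable (fun w => h (z₀, w) * ((starRingEnd ℂ) (g j w) * ((φ₂ w : ℝ) : ℂ)))
        (volume.restrict X₂) ∧ DifferentiableAt ℂ (d j) z₀ :=
    fun j z₀ hz₀ => key_diff hX₁ hX₂ hw₁ hw₂ he₁ hdiff hint (hgmem j) hz₀
  have hddiff : ∀ j, ∀ z ∈ X₁, DifferentiableAt ℂ (d j) z := fun j z hz => (hkey j z hz).2
  have hdcont : ∀ j, ContinuousOn (d j) X₁ := fun j z hz =>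
    ((hddiff j z hz).continuousAt).continuousWithinAt
  -- membership of d j in A²(X₁, φ₁)
  have hdmem : ∀ j, MemA2 X₁ φ₁ (d j) := by
    intro j
    refine ⟨fun z hz => (hddiff j z hz).differentiableWithinAt, ?_⟩
    have hmeas : AEStronglyMeasurable (fun z => ‖d j z‖ ^ 2 * φ₁ z) (volume.restrict X₁) := by
      have h1 : AEStronglyMeasurable (d j) (volume.restrict X₁) :=
        (hdcont j).aestronglyMeasurable hX₁m
      have h2 : (fun z => ‖d j z‖ ^ 2 * φ₁ z) = fun z => (‖d j z‖ * ‖d j z‖) * φ₁ z := by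
        funext z
        ring
      rw [h2]
      exact (h1.norm.mul h1.norm).mul hw₁.1.aestronglyMeasurable
    refine Integrable.mono' hGint hmeas ?_
    filter_upwards [hmemZ, hphi1, ae_restrict_mem hX₁m] with z hz1 hz2 hz3
    rw [Real.norm_eq_abs, abs_of_nonneg (mul_nonneg (by positivity) hz2.le)]
    have hG0 : 0 ≤ normSqA2 X₂ φ₂ (fun w => h (z, w)) :=
      integral_nonneg_of_ae (hphi2.mono fun w hw => mul_nonneg (by positivity) hw.le)
    have hdle : ‖d j z‖ ≤ Real.sqrt (normSqA2 X₂ φ₂ (fun w => h (z, w))) := by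
      have h1 : ‖d j z‖ ≤ ∫ w, ‖h (z, w) * ((starRingEnd ℂ) (g j w) * ((φ₂ w : ℝ) : ℂ))‖
          ∂(volume.restrict X₂) := norm_integral_le_integral_norm _
      have h2 : ∫ w, ‖h (z, w) * ((starRingEnd ℂ) (g j w) * ((φ₂ w : ℝ) : ℂ))‖
            ∂(volume.restrict X₂)
          = ∫ w, (‖h (z, w)‖ * Real.sqrt (φ₂ w)) * (‖g j w‖ * Real.sqrt (φ₂ w))
            ∂(volume.restrict X₂) := by
        refine integral_congr_ae ?_
        filter_upwards [hphi2] with w hw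
        beta_reduce
        rw [norm_mul, norm_mul, RCLike.norm_conj, Complex.norm_real, Real.norm_eq_abs,
          abs_of_nonneg hw.le,
          show ‖h (z, w)‖ * Real.sqrt (φ₂ w) * (‖g j w‖ * Real.sqrt (φ₂ w))
            = ‖h (z, w)‖ * ‖g j w‖ * (Real.sqrt (φ₂ w) * Real.sqrt (φ₂ w)) by ring,
          Real.mul_self_sqrt hw.le]
        ring
      have hmes1 : AEStronglyMeasurable (fun w => ‖h (z, w)‖ * Real.sqrt (φ₂ w))
          (volume.restrict X₂) :=
        ((hcontW z hz3).norm.aestronglyMeasurable hX₂m).mul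
          (Real.continuous_sqrt.measurable.comp hw₂.1).aestronglyMeasurable
      have hmes2 : AEStronglyMeasurable (fun w => ‖g j w‖ * Real.sqrt (φ₂ w))
          (volume.restrict X₂) :=
        ((hgc j).norm.aestronglyMeasurable hX₂m).mul
          (Real.continuous_sqrt.measurable.comp hw₂.1).aestronglyMeasurable
      have hi1 : Integrable (fun w => (‖h (z, w)‖ * Real.sqrt (φ₂ w)) ^ 2)
          (volume.restrict X₂) := by
        refine (hz1.2).congr ?_
        filter_upwards [hphi2] with w hw
        beta_reduce
        rw [mul_pow, Real.sq_sqrt hw.le]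
      have hi2 : Integrable (fun w => (‖g j w‖ * Real.sqrt (φ₂ w)) ^ 2)
          (volume.restrict X₂) := by
        refine ((hgmem j).2).congr ?_
        filter_upwards [hphi2] with w hw
        beta_reduce
        rw [mul_pow, Real.sq_sqrt hw.le]
      have h3 := cs_integral (volume.restrict X₂)
        (Filter.Eventually.of_forall fun w =>
          mul_nonneg (norm_nonneg _) (Real.sqrt_nonneg _))
        (Filter.Eventually.of_forall fun w =>
          mul_nonneg (norm_nonneg _) (Real.sqrt_nonneg _))
        hmes1 hmes2 hi1 hi2
      have hsq1 : ∫ w, (‖h (z, w)‖ * Real.sqrt (φ₂ w)) ^ 2 ∂(volume.restrict X₂)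
          = normSqA2 X₂ φ₂ (fun w => h (z, w)) := by
        refine integral_congr_ae ?_
        filter_upwards [hphi2] with w hw
        beta_reduce
        rw [mul_pow, Real.sq_sqrt hw.le]
      have hsq2 : ∫ w, (‖g j w‖ * Real.sqrt (φ₂ w)) ^ 2 ∂(volume.restrict X₂)
          = normSqA2 X₂ φ₂ (g j) := by
        refine integral_congr_ae ?_
        filter_upwards [hphi2] with w hw
        beta_reduce
        rw [mul_pow, Real.sq_sqrt hw.le]
      rw [hsq1, hsq2, hgnorm j, Real.sqrt_one, mul_one] at h3
      calc ‖d j z‖ ≤ _ := h1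
        _ = _ := h2
        _ ≤ _ := h3
    have hdsq : ‖d j z‖ ^ 2 ≤ normSqA2 X₂ φ₂ (fun w => h (z, w)) := by
      nlinarith [norm_nonneg (d j z), Real.sq_sqrt hG0, Real.sqrt_nonneg
        (normSqA2 X₂ φ₂ (fun w => h (z, w)))]
    exact mul_le_mul_of_nonneg_right hdsq hz2.le
  -- product integrability for Fubini
  have hprodint : ∀ i j, Integrable (fun p : (Fin n → ℂ) × (Fin m → ℂ) =>
      h p * ((starRingEnd ℂ) (g j p.2) * ((φ₂ p.2 : ℝ) : ℂ))
        * ((starRingEnd ℂ) (f i p.1) * ((φ₁ p.1 : ℝ) : ℂ)))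
      (((volume : Measure (Fin n → ℂ)).restrict X₁).prod
        ((volume : Measure (Fin m → ℂ)).restrict X₂)) := by
    intro i j
    have hFG : Integrable (fun p : (Fin n → ℂ) × (Fin m → ℂ) =>
        ‖f i p.1 * g j p.2‖ ^ 2 * (φ₁ p.1 * φ₂ p.2))
        (((volume : Measure (Fin n → ℂ)).restrict X₁).prod
          ((volume : Measure (Fin m → ℂ)).restrict X₂)) := by
      rw [← hres]
      exact (hmemprod i j).2
    have hpm : MeasurableSet (X₁ ×ˢ X₂) := hX₁m.prod hX₂m
    have hmeas : AEStronglyMeasurable (fun p : (Fin n → ℂ) × (Fin m → ℂ) =>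
        h p * ((starRingEnd ℂ) (g j p.2) * ((φ₂ p.2 : ℝ) : ℂ))
          * ((starRingEnd ℂ) (f i p.1) * ((φ₁ p.1 : ℝ) : ℂ)))
        (((volume : Measure (Fin n → ℂ)).restrict X₁).prod
          ((volume : Measure (Fin m → ℂ)).restrict X₂)) := by
      rw [← hres]
      refine ((hcont.aestronglyMeasurable hpm).mul (AEStronglyMeasurable.mul ?_ ?_)).mul
        (AEStronglyMeasurable.mul ?_ ?_)
      · exact (((hgc j).comp continuous_snd.continuousOn
          fun p hp => hp.2).star.aestronglyMeasurable hpm)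
      · exact ((Complex.continuous_ofReal.measurable.comp hw₂.1).comp
          measurable_snd).aestronglyMeasurable
      · exact (((hfc i).comp continuous_fst.continuousOn
          fun p hp => hp.1).star.aestronglyMeasurable hpm)
      · exact ((Complex.continuous_ofReal.measurable.comp hw₁.1).comp
          measurable_fst).aestronglyMeasurable
    refine Integrable.mono' ((hint.add hFG).div_const 2) hmeas ?_
    have hm1 : MeasurableSet {x : Fin n → ℂ | ¬ 0 < φ₁ x} :=
      (measurableSet_lt measurable_const hw₁.1).compl
    have hm2 : MeasurableSet {x : Fin m → ℂ | ¬ 0 < φ₂ x} :=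
      (measurableSet_lt measurable_const hw₂.1).compl
    filter_upwards [ae_fst' hm1 hphi1, ae_snd' hm2 hphi2] with p h1 h2
    rw [norm_mul, norm_mul, norm_mul, norm_mul, RCLike.norm_conj, RCLike.norm_conj,
      Complex.norm_real, Complex.norm_real, Real.norm_eq_abs, Real.norm_eq_abs,
      abs_of_nonneg h1.le, abs_of_nonneg h2.le]
    have hab : ‖h p‖ * (‖f i p.1‖ * ‖g j p.2‖)
        ≤ (‖h p‖ ^ 2 + (‖f i p.1‖ * ‖g j p.2‖) ^ 2) / 2 := by
      nlinarith [sq_nonneg (‖h p‖ - ‖f i p.1‖ * ‖g j p.2‖)]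
    calc ‖h p‖ * (‖g j p.2‖ * φ₂ p.2) * (‖f i p.1‖ * φ₁ p.1)
        = (‖h p‖ * (‖f i p.1‖ * ‖g j p.2‖)) * (φ₁ p.1 * φ₂ p.2) := by ring
      _ ≤ ((‖h p‖ ^ 2 + (‖f i p.1‖ * ‖g j p.2‖) ^ 2) / 2) * (φ₁ p.1 * φ₂ p.2) :=
          mul_le_mul_of_nonneg_right hab (mul_nonneg h1.le h2.le)
      _ = (‖h p‖ ^ 2 * (φ₁ p.1 * φ₂ p.2) + ‖f i p.1 * g j p.2‖ ^ 2 * (φ₁ p.1 * φ₂ p.2)) / 2 := by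
          rw [norm_mul]
          ring
  -- orthogonality of d j to the f i
  have hdperp : ∀ j i, innerA2 X₁ φ₁ (d j) (f i) = 0 := by
    intro j i
    have hstep1 : innerA2 X₁ φ₁ (d j) (f i)
        = ∫ z in X₁, ∫ w in X₂,
            h (z, w) * ((starRingEnd ℂ) (g j w) * ((φ₂ w : ℝ) : ℂ))
              * ((starRingEnd ℂ) (f i z) * ((φ₁ z : ℝ) : ℂ)) := by
      rw [innerA2]
      congr 1
      funext z
      rw [mul_assoc]
      exact (integral_mul_const _ _).symm
    rw [hstep1, integral_integral (hprodint i j)]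
    have hstep2 : ∫ p : (Fin n → ℂ) × (Fin m → ℂ),
        h p * ((starRingEnd ℂ) (g j p.2) * ((φ₂ p.2 : ℝ) : ℂ))
          * ((starRingEnd ℂ) (f i p.1) * ((φ₁ p.1 : ℝ) : ℂ))
        ∂(((volume : Measure (Fin n → ℂ)).restrict X₁).prod
          ((volume : Measure (Fin m → ℂ)).restrict X₂))
        = innerA2 (X₁ ×ˢ X₂) (prodWeight φ₁ φ₂) h (fun p => f i p.1 * g j p.2) := by
      rw [innerA2, hres]
      congr 1
      funext p
      simp only [prodWeight, map_mul, Complex.ofReal_mul]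
      ring
    rw [hstep2]
    exact horth i j
  have hdzero : ∀ j, ∀ z ∈ X₁, d j z = 0 := fun j =>
    hfcomp (d j) (hdmem j) (fun i => hdperp j i)
  have haez : ∀ᵐ z ∂(volume.restrict X₁), ∀ w ∈ X₂, h (z, w) = 0 := by
    filter_upwards [hmemZ, ae_restrict_mem hX₁m] with z h1 h2
    refine hgcomp (fun w => h (z, w)) h1 (fun j => ?_)
    have h3 := hdzero j z h2
    rw [innerA2]
    simp only [mul_assoc]
    exact h3
  -- conclusion by continuity
  rintro ⟨z₀, w₀⟩ ⟨hz₀, hw₀⟩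
  by_contra hne
  have hcAt : ContinuousAt h (z₀, w₀) := hcont.continuousAt (hopen.mem_nhds ⟨hz₀, hw₀⟩)
  have hcu : ContinuousAt (fun z => h (z, w₀)) z₀ := by
    have hc2 : Continuous (fun z : Fin n → ℂ => (z, w₀)) :=
      continuous_id.prodMk continuous_const
    exact ContinuousAt.comp (x := z₀) hcAt hc2.continuousAt
  have hev : ∀ᶠ z in nhds z₀, h (z, w₀) ≠ 0 := hcu.eventually_ne hne
  have hev2 : ∀ᶠ z in nhds z₀, z ∈ X₁ ∧ h (z, w₀) ≠ 0 :=
    (Filter.eventually_of_mem (hX₁.mem_nhds hz₀) fun z hz => hz).and hev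
  obtain ⟨δ, hδpos, hδ⟩ := Metric.eventually_nhds_iff.1 hev2
  have hnull : (volume.restrict X₁) {z | ¬ ∀ w ∈ X₂, h (z, w) = 0} = 0 := ae_iff.1 haez
  have hsub : Metric.ball z₀ δ ⊆ {z | ¬ ∀ w ∈ X₂, h (z, w) = 0} := by
    intro z hz
    have h4 := hδ (by rwa [Metric.mem_ball] at hz)
    exact fun hall => h4.2 (hall w₀ hw₀)
  have hb0 : (volume.restrict X₁) (Metric.ball z₀ δ) = 0 := measure_mono_null hsub hnull
  have hballX₁ : Metric.ball z₀ δ ⊆ X₁ := fun z hz =>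
    (hδ (by rwa [Metric.mem_ball] at hz)).1
  have hbpos : 0 < (volume.restrict X₁) (Metric.ball z₀ δ) := by
    rw [Measure.restrict_apply measurableSet_ball,
      Set.inter_eq_self_of_subset_left hballX₁]
    exact Metric.measure_ball_pos _ _ hδpos
  exact absurd hb0 hbpos.ne'
end
end

section
/- Let M ⊆ ℂ^n and U ⊆ ℂ^m be domains, let γ be a weight on U, let e ∈ A²(U,γ), and let f : M × U → ℂ be holomorphic. Assume that for every compact subset K ⊆ M one has sup_{z∈K} ∫_U |f(z,u)|² γ(u) dλ(u) < ∞. Then for every z ∈ M the integral g(z) := ∫_U f(z,u)·conj(e(u))·γ(u) dλ(u) converges absolutely, the resulting function g is holomorphic on M, and its partial derivatives are obtained by differentiating under the integral sign: ∂g/∂z_j(z) = ∫_U (∂f/∂z_j)(z,u)·conj(e(u))·γ(u) dλ(u) for every 1 ≤ j ≤ n and z ∈ M. -/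
open MeasureTheory

noncomputable section

section Aux
set_option maxHeartbeats 1000000
open Set Metric Real intervalIntegral

lemma measurable_indicator_of_continuousOn' {α β : Type*} [MeasurableSpace α]
    [TopologicalSpace α] [OpensMeasurableSpace α] [MeasurableSpace β] [TopologicalSpace β]
    [BorelSpace β] [Zero β] {f : α → β} {s : Set α} (hs : MeasurableSet s)
    (hf : ContinuousOn f s) : Measurable (s.indicator f) := by
  have h1 : Measurable (fun x : s => f x) := (hf.restrict).measurable
  have h2 := (MeasurableEmbedding.subtype_coe hs).measurable_extend h1
    (measurable_const : Measurable fun _ : α => (0 : β))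
  convert h2 using 1
  funext x
  by_cases hx : x ∈ s
  · rw [Set.indicator_of_mem hx,
      (MeasurableEmbedding.subtype_coe hs).injective.extend_apply _ _ ⟨x, hx⟩]
  · rw [Set.indicator_of_notMem hx, Function.extend_apply']
    rintro ⟨⟨y, hy⟩, rfl⟩; exact hx hy

theorem lintegral_comp_polarCoord_symm' (g : ℝ × ℝ → ENNReal) :
    ∫⁻ p in polarCoord.target, ENNReal.ofReal p.1 * g (polarCoord.symm p) = ∫⁻ p, g p := by
  set B : ℝ × ℝ → ℝ × ℝ →L[ℝ] ℝ × ℝ := fun p =>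
    LinearMap.toContinuousLinearMap (Matrix.toLin (Module.Basis.finTwoProd ℝ) (Module.Basis.finTwoProd ℝ)
      !![Real.cos p.2, -p.1 * Real.sin p.2; Real.sin p.2, p.1 * Real.cos p.2])
  have A : ∀ p ∈ polarCoord.target, HasFDerivWithinAt polarCoord.symm (B p) polarCoord.target p :=
    fun p _ => by exact (hasFDerivAt_polarCoord_symm p).hasFDerivWithinAt
  have B_det : ∀ p, (B p).det = p.1 := by
    intro p
    conv_rhs => rw [← one_mul p.1, ← cos_sq_add_sin_sq p.2]
    simp only [B, neg_mul, LinearMap.det_toContinuousLinearMap, LinearMap.det_toLin,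
      Matrix.det_fin_two_of, sub_neg_eq_add]
    ring
  symm
  calc
    ∫⁻ p, g p = ∫⁻ p in polarCoord.source, g p := by
      rw [← setLIntegral_univ]
      exact (setLIntegral_congr polarCoord_source_ae_eq_univ.symm)
    _ = ∫⁻ p in polarCoord.symm '' polarCoord.target, g p := by
      rw [polarCoord.symm_image_target_eq_source]
    _ = ∫⁻ p in polarCoord.target, ENNReal.ofReal |(B p).det| * g (polarCoord.symm p) := by
      apply lintegral_image_eq_lintegral_abs_det_fderiv_mul volume
        polarCoord.open_target.measurableSet A polarCoord.symm.injOn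
    _ = ∫⁻ p in polarCoord.target, ENNReal.ofReal p.1 * g (polarCoord.symm p) := by
      refine setLIntegral_congr_fun polarCoord.open_target.measurableSet
        (fun x hx => ?_)
      rw [B_det, abs_of_pos hx.1]

protected theorem Complex.lintegral_comp_polarCoord_symm' (g : ℂ → ENNReal) :
    ∫⁻ p in polarCoord.target, ENNReal.ofReal p.1 * g (Complex.polarCoord.symm p)
      = ∫⁻ z, g z := by
  rw [← (Complex.volume_preserving_equiv_real_prod.symm).lintegral_comp_emb
    Complex.measurableEquivRealProd.symm.measurableEmbedding, ← lintegral_comp_polarCoord_symm']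
  rfl

-- circle average inequality
lemma circle_avg_sq_le {h : ℂ → ℂ} {V : Set ℂ} (hd : DifferentiableOn ℂ h V)
    {c : ℂ} {s : ℝ} (hs : 0 < s) (hsub : closedBall c s ⊆ V) :
    ENNReal.ofReal (2 * π * ‖h c‖ ^ 2)
      ≤ ∫⁻ θ in Ioo (-π) π, ENNReal.ofReal (‖h (circleMap c s θ)‖ ^ 2) := by
  have hsub' : closure (Metric.ball c s) ⊆ V := by
    rw [closure_ball c hs.ne']; exact hsub
  set h2 : ℂ → ℂ := fun w => h w * h w with hh2
  have hd2 : DifferentiableOn ℂ h2 V := hd.mul hd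
  have hdc : DiffContOnCl ℂ h2 (Metric.ball c s) := (hd2.mono hsub').diffContOnCl
  have key := hdc.circleIntegral_sub_inv_smul (Metric.mem_ball_self hs)
  -- unfold circle integral
  rw [circleIntegral] at key
  have e1 : ∀ θ : ℝ, deriv (circleMap c s) θ • ((circleMap c s θ - c)⁻¹ • h2 (circleMap c s θ))
      = Complex.I * h2 (circleMap c s θ) := by
    intro θ
    rw [deriv_circleMap, circleMap_sub_center, smul_eq_mul, smul_eq_mul]
    have hne : circleMap 0 s θ ≠ 0 := circleMap_ne_center hs.ne'
    field_simp
  simp only [e1] at key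
  rw [intervalIntegral.integral_const_mul] at key
  have hIne : (Complex.I : ℂ) ≠ 0 := Complex.I_ne_zero
  have key2 : (∫ θ in (0:ℝ)..2 * π, h2 (circleMap c s θ)) = (2 * π : ℝ) * h2 c := by
    have : (2 * ↑π * Complex.I) • h2 c = Complex.I * ((2 * π : ℝ) * h2 c) := by
      push_cast; ring_nf
    rw [this] at key
    exact mul_left_cancel₀ hIne key
  -- norms
  have hnorm : 2 * π * ‖h c‖ ^ 2 ≤ ∫ θ in (0:ℝ)..2 * π, ‖h (circleMap c s θ)‖ ^ 2 := by
    have h1 : 2 * π * ‖h c‖ ^ 2 = ‖∫ θ in (0:ℝ)..2 * π, h2 (circleMap c s θ)‖ := by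
      rw [key2, norm_mul, Complex.norm_real, Real.norm_eq_abs, abs_of_pos Real.two_pi_pos]
      simp only [hh2, norm_mul, sq]
    rw [h1]
    have := intervalIntegral.norm_integral_le_integral_norm
      (f := fun θ => h2 (circleMap c s θ)) (a := 0) (b := 2 * π) (μ := volume) Real.two_pi_pos.le
    convert this.trans (le_of_eq ?_) using 1
    apply intervalIntegral.integral_congr
    intro θ _; simp [hh2, norm_mul, sq]
  -- continuity of the integrand
  have hcont : Continuous fun θ : ℝ => ‖h (circleMap c s θ)‖ ^ 2 := by
    have hmap : ∀ θ : ℝ, circleMap c s θ ∈ V := fun θ =>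
      hsub (sphere_subset_closedBall (circleMap_mem_sphere c hs.le θ))
    have : Continuous (h ∘ (circleMap c s)) :=
      hd.continuousOn.comp_continuous (continuous_circleMap c s) hmap
    exact (this.norm.pow 2)
  -- periodic shift : ∫ over (-π)..π equals ∫ over 0..2π
  have hper : Function.Periodic (fun θ : ℝ => ‖h (circleMap c s θ)‖ ^ 2) (2 * π) := by
    intro θ; simp [periodic_circleMap c s θ]
  have hshift : (∫ θ in (-π)..(-π + 2 * π), ‖h (circleMap c s θ)‖ ^ 2)
      = ∫ θ in (0:ℝ)..(0 + 2 * π), ‖h (circleMap c s θ)‖ ^ 2 :=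
    hper.intervalIntegral_add_eq (-π) 0
  rw [zero_add] at hshift
  -- convert to lintegral over Ioo
  have hIoc : (∫⁻ θ in Ioo (-π) π, ENNReal.ofReal (‖h (circleMap c s θ)‖ ^ 2))
      = ENNReal.ofReal (∫ θ in (-π)..π, ‖h (circleMap c s θ)‖ ^ 2) := by
    rw [intervalIntegral.integral_of_le (by linarith [Real.pi_pos] : -π ≤ π),
      MeasureTheory.ofReal_integral_eq_lintegral_ofReal
        (hcont.integrableOn_Ioc (a := -π) (b := π))
        (Filter.Eventually.of_forall fun θ => by positivity)]
    exact setLIntegral_congr Ioo_ae_eq_Ioc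
  rw [hIoc]
  apply ENNReal.ofReal_le_ofReal
  calc 2 * π * ‖h c‖ ^ 2 ≤ ∫ θ in (0:ℝ)..2 * π, ‖h (circleMap c s θ)‖ ^ 2 := hnorm
    _ = ∫ θ in (-π)..π, ‖h (circleMap c s θ)‖ ^ 2 := by
        rw [← hshift, show (-π) + 2 * π = π by ring]

lemma disc_submean {h : ℂ → ℂ} {V : Set ℂ} (hd : DifferentiableOn ℂ h V)
    {c : ℂ} {r : ℝ} (hr : 0 < r) (hsub : closedBall c r ⊆ V) :
    ENNReal.ofReal (π * r ^ 2) * ENNReal.ofReal (‖h c‖ ^ 2)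
      ≤ ∫⁻ w in closedBall c r, ENNReal.ofReal (‖h w‖ ^ 2) := by
  set k : ℂ → ENNReal :=
    (closedBall (0:ℂ) r).indicator (fun w => ENNReal.ofReal (‖h (c + w)‖ ^ 2)) with hk
  have hpre : (fun w : ℂ => c + w) ⁻¹' (closedBall c r) = closedBall (0:ℂ) r := by
    ext w; simp [dist_eq_norm]
  have hmapsto : MapsTo (fun w : ℂ => c + w) (closedBall (0:ℂ) r) V := fun w hw =>
    hsub (by rw [← hpre] at hw; exact hw)
  have hcont : ContinuousOn (fun w : ℂ => ENNReal.ofReal (‖h (c + w)‖ ^ 2))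
      (closedBall (0:ℂ) r) := by
    apply ENNReal.continuous_ofReal.comp_continuousOn
    exact (((hd.continuousOn.comp ((continuous_const.add continuous_id).continuousOn)
      hmapsto).norm).pow 2)
  have hkm : Measurable k :=
    measurable_indicator_of_continuousOn' measurableSet_closedBall hcont
  have hsymc : Continuous (fun p : ℝ × ℝ => Complex.polarCoord.symm p) := by
    simp only [Complex.polarCoord_symm_apply]
    fun_prop
  -- step0
  have step0 : ∫⁻ w in closedBall c r, ENNReal.ofReal (‖h w‖ ^ 2) = ∫⁻ w, k w := by
    rw [hk, lintegral_indicator measurableSet_closedBall]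
    have mp : MeasurePreserving (fun w : ℂ => c + w) volume volume :=
      measurePreserving_add_left volume c
    have := mp.setLIntegral_comp_preimage_emb
      (Homeomorph.measurableEmbedding (Homeomorph.addLeft c))
      (fun w => ENNReal.ofReal (‖h w‖ ^ 2)) (closedBall c r)
    rw [hpre] at this
    exact this.symm
  -- step1: polar coordinates
  have step1 : (∫⁻ w, k w)
      = ∫⁻ p in polarCoord.target, ENNReal.ofReal p.1 * k (Complex.polarCoord.symm p) :=
    (Complex.lintegral_comp_polarCoord_symm' k).symm
  -- step2: restrict to smaller rectangle
  set S : Set (ℝ × ℝ) := Ioc 0 r ×ˢ Ioo (-π) π with hS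
  have hSsub : S ⊆ polarCoord.target := by
    rw [hS, polarCoord_target]
    exact prod_mono_left Ioc_subset_Ioi_self
  have step2 : (∫⁻ p in S, ENNReal.ofReal p.1 * k (Complex.polarCoord.symm p))
      ≤ ∫⁻ p in polarCoord.target, ENNReal.ofReal p.1 * k (Complex.polarCoord.symm p) :=
    lintegral_mono_set hSsub
  -- step3: iterated integral
  have hFm : Measurable (fun p : ℝ × ℝ => ENNReal.ofReal p.1 * k (Complex.polarCoord.symm p)) :=
    (ENNReal.measurable_ofReal.comp measurable_fst).mul (hkm.comp hsymc.measurable)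
  have step3 : (∫⁻ p in S, ENNReal.ofReal p.1 * k (Complex.polarCoord.symm p))
      = ∫⁻ s in Ioc 0 r, ENNReal.ofReal s * ∫⁻ θ in Ioo (-π) π,
          k (Complex.polarCoord.symm (s, θ)) := by
    rw [hS, Measure.volume_eq_prod, ← Measure.prod_restrict, lintegral_prod _ hFm.aemeasurable]
    congr 1; funext s
    exact lintegral_const_mul' _ _ ENNReal.ofReal_ne_top
  -- step4: inner bound for s ∈ Ioc 0 r
  have step4 : ∀ s ∈ Ioc (0:ℝ) r,
      ENNReal.ofReal s * ENNReal.ofReal (2 * π * ‖h c‖ ^ 2)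
        ≤ ENNReal.ofReal s * ∫⁻ θ in Ioo (-π) π, k (Complex.polarCoord.symm (s, θ)) := by
    rintro s ⟨hs0, hsr⟩
    apply mul_le_mul_right
    have hkeq : ∀ θ : ℝ, k (Complex.polarCoord.symm (s, θ))
        = ENNReal.ofReal (‖h (circleMap c s θ)‖ ^ 2) := by
      intro θ
      have hmem : Complex.polarCoord.symm (s, θ) ∈ closedBall (0:ℂ) r := by
        simp only [mem_closedBall, dist_zero_right,
          Complex.norm_polarCoord_symm, abs_of_pos hs0]
        exact hsr
      rw [hk, Set.indicator_of_mem hmem]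
      congr 2
      rw [Complex.polarCoord_symm_apply, circleMap, Complex.exp_mul_I]
      push_cast
      ring
    simp only [hkeq]
    exact circle_avg_sq_le hd hs0 (closedBall_subset_closedBall hsr |>.trans hsub)
  have hGm : Measurable (fun s : ℝ => ENNReal.ofReal s * ∫⁻ θ in Ioo (-π) π,
      k (Complex.polarCoord.symm (s, θ))) := by
    apply (measurable_id.ennreal_ofReal).mul
    exact (hkm.comp hsymc.measurable).lintegral_prod_right'
  have step4' : (∫⁻ s in Ioc (0:ℝ) r, ENNReal.ofReal s * ENNReal.ofReal (2 * π * ‖h c‖ ^ 2))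
      ≤ ∫⁻ s in Ioc 0 r, ENNReal.ofReal s * ∫⁻ θ in Ioo (-π) π,
          k (Complex.polarCoord.symm (s, θ)) :=
    setLIntegral_mono hGm step4
  -- step5: compute the left side
  have step5 : (∫⁻ s in Ioc (0:ℝ) r, ENNReal.ofReal s * ENNReal.ofReal (2 * π * ‖h c‖ ^ 2))
      = ENNReal.ofReal (r ^ 2 / 2) * ENNReal.ofReal (2 * π * ‖h c‖ ^ 2) := by
    rw [lintegral_mul_const' _ _ ENNReal.ofReal_ne_top]
    congr 1
    have hint : IntegrableOn (fun s : ℝ => s) (Ioc 0 r) volume :=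
      continuous_id.integrableOn_Ioc
    have hnn : (0:ℝ → ℝ) ≤ᵐ[volume.restrict (Ioc 0 r)] fun s => s :=
      ae_restrict_of_forall_mem measurableSet_Ioc fun s hs => hs.1.le
    rw [← MeasureTheory.ofReal_integral_eq_lintegral_ofReal hint hnn]
    congr 1
    rw [← intervalIntegral.integral_of_le hr.le, integral_id]
    ring
  -- assemble
  calc ENNReal.ofReal (π * r ^ 2) * ENNReal.ofReal (‖h c‖ ^ 2)
      = ENNReal.ofReal (r ^ 2 / 2) * ENNReal.ofReal (2 * π * ‖h c‖ ^ 2) := by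
        rw [← ENNReal.ofReal_mul (by positivity), ← ENNReal.ofReal_mul (by positivity)]
        congr 1; ring
    _ ≤ ∫⁻ s in Ioc 0 r, ENNReal.ofReal s * ∫⁻ θ in Ioo (-π) π,
          k (Complex.polarCoord.symm (s, θ)) := step5 ▸ step4'
    _ = ∫⁻ p in S, ENNReal.ofReal p.1 * k (Complex.polarCoord.symm p) := step3.symm
    _ ≤ ∫⁻ p in polarCoord.target, ENNReal.ofReal p.1 * k (Complex.polarCoord.symm p) := step2
    _ = ∫⁻ w, k w := step1.symm
    _ = ∫⁻ w in closedBall c r, ENNReal.ofReal (‖h w‖ ^ 2) := step0.symm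

lemma pi_submean : ∀ (n : ℕ) (h : (Fin n → ℂ) → ℂ) (V : Set (Fin n → ℂ))
    (hd : DifferentiableOn ℂ h V) (c : Fin n → ℂ) (r : ℝ) (hr : 0 < r)
    (hsub : closedBall c r ⊆ V),
    ENNReal.ofReal (π * r ^ 2) ^ n * ENNReal.ofReal (‖h c‖ ^ 2)
      ≤ ∫⁻ w in closedBall c r, ENNReal.ofReal (‖h w‖ ^ 2) := by
  intro n
  induction n with
  | zero =>
    intro h V hd c r hr hsub
    have hball : (closedBall c r : Set (Fin 0 → ℂ)) = univ := by
      apply eq_univ_iff_forall.2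
      intro x
      rw [mem_closedBall, Subsingleton.elim x c]
      simpa using hr.le
    have hcongr : ∀ w : Fin 0 → ℂ, ENNReal.ofReal (‖h w‖ ^ 2) = ENNReal.ofReal (‖h c‖ ^ 2) :=
      fun w => by rw [Subsingleton.elim w c]
    rw [hball]
    rw [setLIntegral_univ, lintegral_congr hcongr, lintegral_const]
    have : (volume : Measure (Fin 0 → ℂ)) univ = 1 := by
      simp [MeasureTheory.volume_pi, Measure.pi_univ]
    rw [this, pow_zero, one_mul, mul_one]
  | succ n ih =>
    intro h V hd c r hr hsub
    set T := (MeasurableEquiv.piFinSuccAbove (fun _ : Fin (n+1) => ℂ) 0).symm with hTdef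
    have hTmp : MeasurePreserving T volume volume :=
      (volume_preserving_piFinSuccAbove (fun _ : Fin (n+1) => ℂ) 0).symm
    set c0 : ℂ := c 0 with hc0
    set c' : Fin n → ℂ := fun j => c ((0 : Fin (n+1)).succAbove j) with hc'
    have hTeq : ∀ (x : ℂ) (p : Fin n → ℂ), T (x, p) = Fin.insertNth 0 x p := fun x p => rfl
    have hmem : ∀ (x : ℂ) (p : Fin n → ℂ),
        T (x, p) ∈ closedBall c r ↔ x ∈ closedBall c0 r ∧ p ∈ closedBall c' r := by
      intro x p
      rw [hTeq]
      simp only [mem_closedBall]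
      rw [dist_pi_le_iff hr.le, dist_pi_le_iff hr.le,
        Fin.forall_iff_succAbove (0 : Fin (n+1))]
      simp [Fin.insertNth_apply_same, Fin.insertNth_apply_succAbove, hc', hc0]
    -- differentiability of the insertion maps
    have hA : ∀ x : ℂ, Differentiable ℂ (fun p : Fin n → ℂ => T (x, p)) := by
      intro x
      apply differentiable_pi.2
      intro i
      induction i using Fin.cases with
      | zero => simpa [hTeq, Fin.insertNth_apply_same] using differentiable_const x
      | succ j =>
        have : (fun p : Fin n → ℂ => T (x, p) j.succ) = fun p => p j := by
          funext p
          rw [hTeq]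
          have := @Fin.insertNth_apply_succAbove n (fun _ => ℂ) 0 x p j
          rwa [Fin.succAbove_zero] at this
        rw [this]
        exact differentiable_pi.1 differentiable_id j
    have hA2 : Differentiable ℂ (fun x : ℂ => T (x, c')) := by
      apply differentiable_pi.2
      intro i
      induction i using Fin.cases with
      | zero => simpa [hTeq, Fin.insertNth_apply_same] using differentiable_id
      | succ j =>
        have : (fun x : ℂ => T (x, c') j.succ) = fun _ => c' j := by
          funext x
          rw [hTeq]
          have := @Fin.insertNth_apply_succAbove n (fun _ => ℂ) 0 x c' j
          rwa [Fin.succAbove_zero] at this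
        rw [this]
        exact differentiable_const _
    -- the indicator function
    set g : (Fin (n+1) → ℂ) → ENNReal :=
      (closedBall c r).indicator (fun w => ENNReal.ofReal (‖h w‖ ^ 2)) with hg
    have hgm : Measurable g := by
      apply measurable_indicator_of_continuousOn' measurableSet_closedBall
      exact ENNReal.continuous_ofReal.comp_continuousOn
        (((hd.continuousOn.mono hsub).norm).pow 2)
    have e0 : (∫⁻ w in closedBall c r, ENNReal.ofReal (‖h w‖ ^ 2))
        = ∫⁻ x : ℂ, ∫⁻ p : Fin n → ℂ, g (T (x, p)) := by
      rw [← lintegral_indicator measurableSet_closedBall, ← hg, ← hTmp.lintegral_comp hgm,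
        Measure.volume_eq_prod, lintegral_prod (fun q => g (T q)) ((hgm.comp T.measurable).aemeasurable)]
    -- lower bound for the inner integral
    set φ : ℂ → ENNReal :=
      (closedBall c0 r).indicator (fun x => ENNReal.ofReal (‖h (T (x, c'))‖ ^ 2)) with hφ
    have key : ∀ x : ℂ, ENNReal.ofReal (π * r ^ 2) ^ n * φ x
        ≤ ∫⁻ p : Fin n → ℂ, g (T (x, p)) := by
      intro x
      by_cases hx : x ∈ closedBall c0 r
      · have hgx : ∀ p : Fin n → ℂ, g (T (x, p))
            = (closedBall c' r).indicator (fun p => ENNReal.ofReal (‖h (T (x, p))‖ ^ 2)) p := by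
          intro p
          by_cases hp : p ∈ closedBall c' r
          · rw [Set.indicator_of_mem hp, hg, Set.indicator_of_mem ((hmem x p).2 ⟨hx, hp⟩)]
          · rw [Set.indicator_of_notMem hp, hg, Set.indicator_of_notMem
              (fun hmem' => hp ((hmem x p).1 hmem').2)]
        rw [hφ, Set.indicator_of_mem hx]
        simp only [hgx]
        rw [lintegral_indicator measurableSet_closedBall]
        have hsub' : closedBall c' r ⊆ (fun p : Fin n → ℂ => T (x, p)) ⁻¹' V :=
          fun p hp => hsub ((hmem x p).2 ⟨hx, hp⟩)
        exact ih (fun p => h (T (x, p))) _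
          (hd.comp (hA x).differentiableOn (fun p hp => hp)) c' r hr hsub'
      · rw [hφ, Set.indicator_of_notMem hx, mul_zero]
        exact zero_le
    -- outer estimate
    have e1 : (∫⁻ x : ℂ, ENNReal.ofReal (π * r ^ 2) ^ n * φ x)
        ≤ ∫⁻ x : ℂ, ∫⁻ p : Fin n → ℂ, g (T (x, p)) := lintegral_mono key
    have e2 : (∫⁻ x : ℂ, ENNReal.ofReal (π * r ^ 2) ^ n * φ x)
        = ENNReal.ofReal (π * r ^ 2) ^ n * ∫⁻ x in closedBall c0 r,
            ENNReal.ofReal (‖h (T (x, c'))‖ ^ 2) := by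
      rw [lintegral_const_mul' _ _ (ENNReal.pow_ne_top ENNReal.ofReal_ne_top), hφ,
        lintegral_indicator measurableSet_closedBall]
    -- apply the 1-dimensional submean estimate
    have hsub2 : closedBall c0 r ⊆ (fun x : ℂ => T (x, c')) ⁻¹' V :=
      fun x hx => hsub ((hmem x c').2 ⟨hx, mem_closedBall_self hr.le⟩)
    have e3 := disc_submean (h := fun x : ℂ => h (T (x, c')))
      (hd.comp hA2.differentiableOn (fun x hx => hx)) hr hsub2
    have hTc : T (c0, c') = c := by
      rw [hTeq]
      exact Fin.insertNth_self_removeNth (0 : Fin (n+1)) c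
    calc ENNReal.ofReal (π * r ^ 2) ^ (n+1) * ENNReal.ofReal (‖h c‖ ^ 2)
        = ENNReal.ofReal (π * r ^ 2) ^ n *
            (ENNReal.ofReal (π * r ^ 2) * ENNReal.ofReal (‖h (T (c0, c'))‖ ^ 2)) := by
          rw [hTc, pow_succ]; ring
      _ ≤ ENNReal.ofReal (π * r ^ 2) ^ n * ∫⁻ x in closedBall c0 r,
            ENNReal.ofReal (‖h (T (x, c'))‖ ^ 2) := mul_le_mul_right e3 _
      _ = ∫⁻ x : ℂ, ENNReal.ofReal (π * r ^ 2) ^ n * φ x := e2.symm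
      _ ≤ ∫⁻ x : ℂ, ∫⁻ p : Fin n → ℂ, g (T (x, p)) := e1
      _ = ∫⁻ w in closedBall c r, ENNReal.ofReal (‖h w‖ ^ 2) := e0.symm

/-- differentiation under the integral sign for
`g(z) = ∫_U f(z,u)·conj(e(u))·γ(u) dλ(u)`, assuming the locally uniform bound
`sup_{z∈K} ∫_U |f(z,u)|² γ(u) dλ(u) < ∞` on compact subsets `K ⊆ M`. -/
theorem differentiation_under_integral_sign {n m : ℕ}
    (M : Set (Fin n → ℂ)) (hMo : IsOpen M) (hMc : IsConnected M)
    (U : Set (Fin m → ℂ)) (hUo : IsOpen U) (hUc : IsConnected U)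
    (γ : (Fin m → ℂ) → ℝ) (hw : IsWeight U γ)
    (e : (Fin m → ℂ) → ℂ) (he : MemA2 U γ e)
    (f : (Fin n → ℂ) × (Fin m → ℂ) → ℂ)
    (hf : DifferentiableOn ℂ f (M ×ˢ U))
    (hbdd : ∀ K : Set (Fin n → ℂ), K ⊆ M → IsCompact K → ∃ C : ℝ, ∀ z ∈ K,
      ∫⁻ u in U, ENNReal.ofReal (‖f (z, u)‖ ^ 2 * γ u) ≤ ENNReal.ofReal C) :
    (∀ z ∈ M, IntegrableOn
      (fun u => f (z, u) * (starRingEnd ℂ) (e u) * (γ u : ℂ)) U volume) ∧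
    DifferentiableOn ℂ
      (fun z => ∫ u in U, f (z, u) * (starRingEnd ℂ) (e u) * (γ u : ℂ)) M ∧
    (∀ j : Fin n, ∀ z ∈ M,
      fderiv ℂ (fun z' => ∫ u in U, f (z', u) * (starRingEnd ℂ) (e u) * (γ u : ℂ)) z
          (Pi.single j 1)
        = ∫ u in U, (fderiv ℂ (fun z' => f (z', u)) z (Pi.single j 1))
            * (starRingEnd ℂ) (e u) * (γ u : ℂ)) := by
  obtain ⟨hγm, hγpos⟩ := hw
  have hUme : MeasurableSet U := hUo.measurableSet
  have hMU : IsOpen (M ×ˢ U) := hMo.prod hUo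
  -- partial derivative facts
  have hpd : ∀ {z u}, z ∈ M → u ∈ U → HasFDerivAt (fun z' => f (z', u))
      (fderiv ℂ (fun z' => f (z', u)) z) z := by
    intro z u hz hu
    have h1 : DifferentiableAt ℂ f (z, u) := hf.differentiableAt (hMU.mem_nhds ⟨hz, hu⟩)
    exact (h1.comp z ((differentiableAt_id).prodMk (differentiableAt_const u))).hasFDerivAt
  set D : (Fin n → ℂ) → (Fin m → ℂ) → ((Fin n → ℂ) →L[ℂ] ℂ) :=
    fun z u => fderiv ℂ (fun z' => f (z', u)) z with hD
  set F' : (Fin n → ℂ) → (Fin m → ℂ) → ((Fin n → ℂ) →L[ℂ] ℂ) :=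
    fun z u => ((starRingEnd ℂ) (e u) * (γ u : ℂ)) • D z u with hF'
  have hfUdiff : ∀ u ∈ U, DifferentiableOn ℂ (fun w => f (w, u)) M :=
    fun u hu w hw => ((hpd hw hu).differentiableAt).differentiableWithinAt
  have hfzc : ∀ z ∈ M, ContinuousOn (fun u => f (z, u)) U := by
    intro z hz
    exact hf.continuousOn.comp ((continuous_const.prodMk continuous_id).continuousOn)
      (fun u hu => ⟨hz, hu⟩)
  have hec : ContinuousOn e U := he.1.continuousOn
  -- the CLM-from-coordinates identity
  have hCLM : ∀ L : (Fin n → ℂ) →L[ℂ] ℂ,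
      L = ∑ j : Fin n, L (Pi.single j 1) • (ContinuousLinearMap.proj j :
        ((Fin n → ℂ) →L[ℂ] ℂ)) := by
    intro L
    apply ContinuousLinearMap.ext
    intro v
    have hv : v = ∑ j : Fin n, v j • (Pi.single j 1 : Fin n → ℂ) := by
      conv_lhs => rw [← Finset.univ_sum_single v]
      refine Finset.sum_congr rfl fun j _ => ?_
      rw [← Pi.single_smul, smul_eq_mul, mul_one]
    conv_lhs => rw [hv]
    rw [map_sum]
    simp [ContinuousLinearMap.sum_apply, smul_eq_mul, mul_comm]
  -- operator norm bound from coordinates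
  have hopnorm : ∀ (L : (Fin n → ℂ) →L[ℂ] ℂ) (b : ℝ), 0 ≤ b →
      (∀ j : Fin n, ‖L (Pi.single j 1)‖ ≤ b) → ‖L‖ ≤ n * b := by
    intro L b hb hj
    apply ContinuousLinearMap.opNorm_le_bound _ (by positivity)
    intro v
    conv_lhs => rw [hCLM L]
    rw [ContinuousLinearMap.sum_apply]
    calc ‖∑ j : Fin n, (L (Pi.single j 1) • (ContinuousLinearMap.proj j :
            ((Fin n → ℂ) →L[ℂ] ℂ))) v‖
        ≤ ∑ j : Fin n, ‖(L (Pi.single j 1) • (ContinuousLinearMap.proj j :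
            ((Fin n → ℂ) →L[ℂ] ℂ))) v‖ := norm_sum_le _ _
      _ ≤ ∑ _j : Fin n, b * ‖v‖ := by
          refine Finset.sum_le_sum fun j _ => ?_
          rw [ContinuousLinearMap.smul_apply, norm_smul]
          exact mul_le_mul (hj j) (norm_le_pi_norm v j) (norm_nonneg _) hb
      _ = n * b * ‖v‖ := by
          rw [Finset.sum_const, Finset.card_univ, Fintype.card_fin, nsmul_eq_mul]
          ring
  -- Part A : integrability
  have hInt : ∀ z ∈ M, IntegrableOn
      (fun u => f (z, u) * (starRingEnd ℂ) (e u) * (γ u : ℂ)) U volume := by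
    intro z hz
    obtain ⟨C, hC⟩ := hbdd {z} (singleton_subset_iff.2 hz) isCompact_singleton
    have hCz := hC z rfl
    have haesm : AEStronglyMeasurable
        (fun u => f (z, u) * (starRingEnd ℂ) (e u) * (γ u : ℂ)) (volume.restrict U) := by
      refine (((hfzc z hz).aestronglyMeasurable hUme).mul ?_).mul
        ((Complex.measurable_ofReal.comp hγm).aestronglyMeasurable)
      exact (Complex.continuous_conj.comp_continuousOn hec).aestronglyMeasurable hUme
    have hf2 : IntegrableOn (fun u => ‖f (z, u)‖ ^ 2 * γ u) U volume := by
      constructor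
      · exact ((((hfzc z hz).norm.pow 2).aestronglyMeasurable hUme).mul
          (hγm.aestronglyMeasurable.restrict))
      · rw [hasFiniteIntegral_iff_norm]
        calc ∫⁻ u in U, ENNReal.ofReal ‖‖f (z, u)‖ ^ 2 * γ u‖
            = ∫⁻ u in U, ENNReal.ofReal (‖f (z, u)‖ ^ 2 * γ u) := by
              apply lintegral_congr_ae
              filter_upwards [hγpos] with u hγu
              rw [Real.norm_eq_abs, abs_of_nonneg (by positivity)]
          _ ≤ ENNReal.ofReal C := hCz
          _ < ⊤ := ENNReal.ofReal_lt_top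
    have hgint : IntegrableOn
        (fun u => (1/2 : ℝ) * (‖f (z, u)‖ ^ 2 * γ u + ‖e u‖ ^ 2 * γ u)) U volume :=
      (hf2.add he.2).const_mul _
    refine hgint.mono' haesm ?_
    filter_upwards [hγpos] with u hγu
    have h1 : ‖f (z, u) * (starRingEnd ℂ) (e u) * ((γ u : ℝ) : ℂ)‖
        = ‖f (z, u)‖ * ‖e u‖ * γ u := by
      simp only [norm_mul, Complex.norm_real, Real.norm_eq_abs, abs_of_pos hγu]
      congr 2
      exact norm_star (e u)
    rw [h1]
    nlinarith [mul_nonneg (sq_nonneg (‖f (z, u)‖ - ‖e u‖)) hγu.le,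
      norm_nonneg (f (z, u)), norm_nonneg (e u), hγu.le]
  -- AE strong measurability of u ↦ D z u
  have haesmD : ∀ z ∈ M, AEStronglyMeasurable (fun u => D z u) (volume.restrict U) := by
    intro z hz
    obtain ⟨δ, hδpos, hδsub⟩ := Metric.nhds_basis_closedBall.mem_iff.1 (hMo.mem_nhds hz)
    have hcj : ∀ j : Fin n, AEStronglyMeasurable (fun u => D z u (Pi.single j 1))
        (volume.restrict U) := by
      intro j
      set v : Fin n → ℂ := Pi.single j 1 with hv
      have hvnorm : ‖v‖ = 1 := by rw [hv, Pi.norm_single]; exact norm_one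
      set w : ℕ → ℂ := fun k => ((δ / (k + 2) : ℝ) : ℂ) with hwdef
      have hwpos : ∀ k : ℕ, (0:ℝ) < δ / (k + 2) := by
        intro k; positivity
      have hwne : ∀ k, w k ≠ 0 := by
        intro k
        exact Complex.ofReal_ne_zero.mpr (hwpos k).ne'
      have hwmem : ∀ k : ℕ, z + (w k) • v ∈ M := by
        intro k
        apply hδsub
        rw [mem_closedBall, dist_eq_norm, add_sub_cancel_left, norm_smul, hvnorm, mul_one,
          hwdef, Complex.norm_real, Real.norm_eq_abs, abs_of_pos (hwpos k)]
        rw [div_le_iff₀ (by positivity)]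
        nlinarith [hδpos.le]
      have hterm : ∀ k : ℕ, AEStronglyMeasurable
          (fun u => (w k)⁻¹ • (f (z + (w k) • v, u) - f (z, u))) (volume.restrict U) := by
        intro k
        have hc1 : ContinuousOn (fun u => f (z + (w k) • v, u) - f (z, u)) U :=
          (hfzc (z + (w k) • v) (hwmem k)).sub (hfzc z hz)
        exact (hc1.aestronglyMeasurable hUme).const_smul ((w k)⁻¹)
      have hwtend : Filter.Tendsto w Filter.atTop (nhdsWithin (0:ℂ) {(0:ℂ)}ᶜ) := by
        apply tendsto_nhdsWithin_of_tendsto_nhds_of_eventually_within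
        · rw [hwdef]
          have : Filter.Tendsto (fun k : ℕ => (δ / (k + 2) : ℝ)) Filter.atTop (nhds 0) := by
            apply Filter.Tendsto.div_atTop (tendsto_const_nhds)
            exact Filter.tendsto_atTop_add_const_right _ 2 tendsto_natCast_atTop_atTop
          have h2 := (Complex.continuous_ofReal.tendsto 0).comp this
          simpa [Function.comp_def] using h2
        · exact Filter.Eventually.of_forall fun k => hwne k
      have hlim : ∀ᵐ u ∂(volume.restrict U), Filter.Tendsto
          (fun k => (w k)⁻¹ • (f (z + (w k) • v, u) - f (z, u))) Filter.atTop
          (nhds (D z u (Pi.single j 1))) := by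
        filter_upwards [ae_restrict_mem hUme] with u hu
        have hℓd : HasDerivAt (fun t : ℂ => z + t • v) v 0 := by
          simpa using ((hasDerivAt_id (0:ℂ)).smul_const v).const_add z
        have hfz : HasFDerivAt (fun z' => f (z', u)) (D z u) ((fun t : ℂ => z + t • v) 0) := by
          simpa using (hpd hz hu)
        have hder : HasDerivAt (fun t : ℂ => f (z + t • v, u)) (D z u v) 0 :=
          hfz.comp_hasDerivAt (f := fun t : ℂ => z + t • v) 0 hℓd
        rw [hasDerivAt_iff_tendsto_slope] at hder
        have hcomp := hder.comp hwtend
        have heq : ∀ k : ℕ, (slope (fun t : ℂ => f (z + t • v, u)) 0) (w k)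
            = (w k)⁻¹ • (f (z + (w k) • v, u) - f (z, u)) := by
          intro k
          rw [slope_def_field]
          simp [div_eq_inv_mul, smul_eq_mul]
        rw [hv]
        convert hcomp using 2 with k
        exact (heq k).symm
      exact aestronglyMeasurable_of_tendsto_ae Filter.atTop hterm hlim
    have hDeq : (fun u => D z u) = fun u => ∑ j : Fin n,
        (D z u (Pi.single j 1)) • (ContinuousLinearMap.proj j :
          ((Fin n → ℂ) →L[ℂ] ℂ)) := funext fun u => hCLM (D z u)
    rw [hDeq]
    exact Finset.aestronglyMeasurable_fun_sum _ fun j _ =>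
      ((hcj j).fun_smul aestronglyMeasurable_const)
  -- the main local statement
  have key : ∀ z₀ ∈ M, HasFDerivAt
      (fun z => ∫ u in U, f (z, u) * (starRingEnd ℂ) (e u) * (γ u : ℂ))
      (∫ u in U, F' z₀ u) z₀ ∧ Integrable (fun u => F' z₀ u) (volume.restrict U) := by
    intro z₀ hz₀
    obtain ⟨ε, hεpos, hεsub⟩ := Metric.nhds_basis_closedBall.mem_iff.1 (hMo.mem_nhds hz₀)
    set R : ℝ := ε / 3 with hRdef
    have hR : (0:ℝ) < R := by positivity
    set P : Set (Fin n → ℂ) := closedBall z₀ (3 * R) with hPdef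
    have hPM : P ⊆ M := by
      rw [hPdef, show (3:ℝ) * R = ε by rw [hRdef]; ring]
      exact hεsub
    have hPc : IsCompact P := isCompact_closedBall _ _
    obtain ⟨C, hC⟩ := hbdd P hPM hPc
    have hballM : ball z₀ R ⊆ M := fun x hx => hPM
      (closedBall_subset_closedBall (by linarith) (ball_subset_closedBall hx))
    -- measurable product indicator and the function B
    set F₂ : (Fin n → ℂ) × (Fin m → ℂ) → ENNReal :=
      (P ×ˢ U).indicator (fun q => ENNReal.ofReal (‖f q‖ ^ 2)) with hF₂
    have hF₂m : Measurable F₂ := by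
      apply measurable_indicator_of_continuousOn' (measurableSet_closedBall.prod hUme)
      exact ENNReal.continuous_ofReal.comp_continuousOn
        (((hf.continuousOn.mono (prod_mono_left hPM)).norm).pow 2)
    set B : (Fin m → ℂ) → ENNReal := fun u => ∫⁻ w, F₂ (w, u) with hB
    have hBm : Measurable B := by
      have : Measurable fun q : (Fin m → ℂ) × (Fin n → ℂ) => F₂ (q.2, q.1) :=
        hF₂m.comp (measurable_snd.prodMk measurable_fst)
      exact this.lintegral_prod_right'
    have hBeq : ∀ u ∈ U, B u = ∫⁻ w in P, ENNReal.ofReal (‖f (w, u)‖ ^ 2) := by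
      intro u hu
      rw [hB]
      show (∫⁻ w, F₂ (w, u)) = _
      rw [← lintegral_indicator measurableSet_closedBall]
      refine lintegral_congr fun w => ?_
      by_cases hw : w ∈ P
      · rw [hF₂, Set.indicator_of_mem (show (w,u) ∈ P ×ˢ U from ⟨hw, hu⟩),
          Set.indicator_of_mem hw]
      · rw [hF₂, Set.indicator_of_notMem (fun hq => hw hq.1), Set.indicator_of_notMem hw]
    -- finiteness of ∫ B γ
    have hBfin : ∫⁻ u in U, B u * ENNReal.ofReal (γ u) < ⊤ := by
      have swap1 : ∫⁻ u in U, B u * ENNReal.ofReal (γ u)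
          = ∫⁻ w, ∫⁻ u in U, F₂ (w, u) * ENNReal.ofReal (γ u) := by
        calc ∫⁻ u in U, B u * ENNReal.ofReal (γ u)
            = ∫⁻ u in U, ∫⁻ w, F₂ (w, u) * ENNReal.ofReal (γ u) := by
              refine lintegral_congr fun u => ?_
              rw [hB]
              show (∫⁻ w, F₂ (w, u)) * ENNReal.ofReal (γ u) = _
              rw [lintegral_mul_const' _ _ ENNReal.ofReal_ne_top]
          _ = ∫⁻ w, ∫⁻ u in U, F₂ (w, u) * ENNReal.ofReal (γ u) := by
              apply lintegral_lintegral_swap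
              apply AEMeasurable.mul
              · exact (hF₂m.comp (measurable_snd.prodMk measurable_fst)).aemeasurable
              · exact ((hγm.comp measurable_fst).ennreal_ofReal).aemeasurable
      rw [swap1]
      have hle : ∀ w, (∫⁻ u in U, F₂ (w, u) * ENNReal.ofReal (γ u))
          ≤ P.indicator (fun _ => ENNReal.ofReal C) w := by
        intro w
        by_cases hw : w ∈ P
        · rw [Set.indicator_of_mem hw]
          calc ∫⁻ u in U, F₂ (w, u) * ENNReal.ofReal (γ u)
              = ∫⁻ u in U, ENNReal.ofReal (‖f (w, u)‖ ^ 2 * γ u) := by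
                apply setLIntegral_congr_fun hUme
                intro u hu; dsimp only
                rw [hF₂, Set.indicator_of_mem (show (w,u) ∈ P ×ˢ U from ⟨hw, hu⟩),
                  ENNReal.ofReal_mul (by positivity)]
            _ ≤ ENNReal.ofReal C := hC w hw
        · rw [Set.indicator_of_notMem hw]
          have : ∀ u, F₂ (w, u) * ENNReal.ofReal (γ u) = 0 := by
            intro u
            rw [hF₂, Set.indicator_of_notMem (fun hq => hw hq.1), zero_mul]
          simp only [this, lintegral_zero, le_refl]
      calc ∫⁻ w, ∫⁻ u in U, F₂ (w, u) * ENNReal.ofReal (γ u)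
          ≤ ∫⁻ w, P.indicator (fun _ => ENNReal.ofReal C) w := lintegral_mono hle
        _ = ENNReal.ofReal C * volume P := lintegral_indicator_const measurableSet_closedBall _
        _ < ⊤ := ENNReal.mul_lt_top ENNReal.ofReal_lt_top hPc.measure_lt_top
    have haefin : ∀ᵐ u ∂(volume.restrict U), B u < ⊤ ∧ 0 < γ u := by
      have h1 := ae_lt_top (hBm.mul hγm.ennreal_ofReal) hBfin.ne
      filter_upwards [h1, hγpos] with u h1u h2u
      refine ⟨?_, h2u⟩
      by_contra hBu
      rw [not_lt, top_le_iff] at hBu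
      rw [Pi.mul_apply, hBu, ENNReal.top_mul (by simp [ENNReal.ofReal_eq_zero, not_le, h2u])] at h1u
      exact (lt_irrefl _ h1u).elim
    set κ : ℝ := ((π * R ^ 2) ^ n)⁻¹ with hκ
    have hκnn : (0:ℝ) ≤ κ := by positivity
    set S : (Fin m → ℂ) → ℝ := fun u => Real.sqrt (κ * (B u).toReal) with hS
    have hSnn : ∀ u, 0 ≤ S u := fun u => Real.sqrt_nonneg _
    -- the sup bound from the submean inequality
    have hsup : ∀ u ∈ U, B u ≠ ⊤ → ∀ ζ ∈ closedBall z₀ (2*R), ‖f (ζ, u)‖ ≤ S u := by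
      intro u hu hBu ζ hζ
      have hsub1 : closedBall ζ R ⊆ P := by
        rw [hPdef]
        apply closedBall_subset_closedBall'
        rw [mem_closedBall] at hζ
        linarith
      have h1 := pi_submean n (fun w => f (w, u)) M (hfUdiff u hu) ζ R hR (hsub1.trans hPM)
      have h2 : (∫⁻ w in closedBall ζ R, ENNReal.ofReal (‖f (w, u)‖ ^ 2)) ≤ B u := by
        rw [hBeq u hu]
        exact lintegral_mono_set hsub1
      have h3 : ENNReal.ofReal ((π * R ^ 2) ^ n * ‖f (ζ, u)‖ ^ 2) ≤ B u := by
        rw [ENNReal.ofReal_mul (by positivity), ENNReal.ofReal_pow (by positivity)]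
        exact h1.trans h2
      rw [ENNReal.ofReal_le_iff_le_toReal hBu] at h3
      simp only [hS]
      rw [show ‖f (ζ, u)‖ = Real.sqrt (‖f (ζ, u)‖ ^ 2) by
        rw [Real.sqrt_sq (norm_nonneg _)]]
      apply Real.sqrt_le_sqrt
      calc ‖f (ζ, u)‖ ^ 2 = κ * ((π * R ^ 2) ^ n * ‖f (ζ, u)‖ ^ 2) := by
            rw [hκ]; field_simp
        _ ≤ κ * (B u).toReal := mul_le_mul_of_nonneg_left h3 hκnn
    -- the derivative bound
    have hDb : ∀ u ∈ U, B u ≠ ⊤ → ∀ z ∈ ball z₀ R, ‖D z u‖ ≤ ((n:ℝ) / R) * S u := by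
      intro u hu hBu z hzb
      have hzM : z ∈ M := hballM hzb
      have hdir : ∀ j : Fin n, ‖D z u (Pi.single j 1)‖ ≤ S u / R := by
        intro j
        set v : Fin n → ℂ := Pi.single j 1 with hv
        have hvnorm : ‖v‖ = 1 := by rw [hv, Pi.norm_single]; exact norm_one
        have hℓmem : ∀ t : ℂ, ‖t‖ ≤ R → z + t • v ∈ closedBall z₀ (2*R) := by
          intro t ht
          rw [mem_closedBall]
          calc dist (z + t • v) z₀ ≤ dist (z + t • v) z + dist z z₀ := dist_triangle _ _ _
            _ ≤ R + R := add_le_add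
                (by rw [dist_eq_norm, add_sub_cancel_left, norm_smul, hvnorm, mul_one]; exact ht)
                (le_of_lt (mem_ball.1 hzb))
            _ = 2 * R := by ring
        have hℓM : ∀ t : ℂ, ‖t‖ ≤ R → z + t • v ∈ M := fun t ht => hPM
          (closedBall_subset_closedBall (by linarith) (hℓmem t ht))
        have hℓd : ∀ t : ℂ, HasDerivAt (fun t : ℂ => z + t • v) v t := by
          intro t
          simpa using ((hasDerivAt_id t).smul_const v).const_add z
        have hgd : DiffContOnCl ℂ (fun t : ℂ => f (z + t • v, u)) (ball 0 R) := by
          apply DifferentiableOn.diffContOnCl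
          rw [closure_ball (0:ℂ) hR.ne']
          intro t ht
          rw [mem_closedBall, dist_zero_right] at ht
          have hfd : HasFDerivAt (fun z' => f (z', u)) (D (z + t • v) u)
              ((fun t : ℂ => z + t • v) t) := hpd (hℓM t ht) hu
          exact (hfd.comp_hasDerivAt t (hℓd t)).differentiableAt.differentiableWithinAt
        have hgderiv : deriv (fun t : ℂ => f (z + t • v, u)) 0 = D z u v := by
          have hfz : HasFDerivAt (fun z' => f (z', u)) (D z u) ((fun t : ℂ => z + t • v) 0) := by
            simpa using (hpd hzM hu)
          exact (hfz.comp_hasDerivAt 0 (hℓd 0)).deriv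
        have hsphere : ∀ t ∈ sphere (0:ℂ) R, ‖f (z + t • v, u)‖ ≤ S u := by
          intro t ht
          rw [mem_sphere, dist_zero_right] at ht
          exact hsup u hu hBu _ (hℓmem t ht.le)
        have hest := Complex.norm_deriv_le_of_forall_mem_sphere_norm_le hR hgd hsphere
        rw [hgderiv] at hest
        exact hest
      have h2 := hopnorm (D z u) (S u / R) (div_nonneg (hSnn u) hR.le) hdir
      calc ‖D z u‖ ≤ n * (S u / R) := h2
        _ = ((n:ℝ) / R) * S u := by ring
    -- the dominating function
    set bound : (Fin m → ℂ) → ℝ := fun u => ((n : ℝ) / R) * S u * (‖e u‖ * γ u) with hbound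
    have hI1 : IntegrableOn (fun u => (B u).toReal * γ u) U volume := by
      constructor
      · exact ((hBm.ennreal_toReal).mul hγm).aestronglyMeasurable.restrict
      · rw [hasFiniteIntegral_iff_norm]
        have hcong : ∀ᵐ u ∂(volume.restrict U),
            ENNReal.ofReal ‖(B u).toReal * γ u‖ = B u * ENNReal.ofReal (γ u) := by
          filter_upwards [haefin] with u hu
          obtain ⟨h1, h2⟩ := hu
          rw [Real.norm_eq_abs, abs_of_nonneg (mul_nonneg ENNReal.toReal_nonneg h2.le),
            ENNReal.ofReal_mul ENNReal.toReal_nonneg, ENNReal.ofReal_toReal h1.ne]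
        rw [lintegral_congr_ae hcong]
        exact hBfin
    have haesmb : AEStronglyMeasurable bound (volume.restrict U) := by
      rw [hbound]
      apply AEStronglyMeasurable.mul
      · apply AEStronglyMeasurable.mul aestronglyMeasurable_const
        exact (Real.continuous_sqrt.measurable.comp
          (measurable_const.mul hBm.ennreal_toReal)).aestronglyMeasurable.restrict
      · exact ((hec.norm.aestronglyMeasurable hUme).mul hγm.aestronglyMeasurable.restrict)
    have hboundint : Integrable bound (volume.restrict U) := by
      have hgint : Integrable (fun u => ((n:ℝ)/R) *
          (2⁻¹ * (κ * ((B u).toReal * γ u) + ‖e u‖^2 * γ u))) (volume.restrict U) :=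
        ((((hI1.const_mul κ).add he.2).const_mul _).const_mul _)
      refine hgint.mono' haesmb ?_
      filter_upwards [haefin] with u hu
      obtain ⟨h1, h2⟩ := hu
      have hS2 : S u ^ 2 = κ * (B u).toReal :=
        Real.sq_sqrt (mul_nonneg hκnn ENNReal.toReal_nonneg)
      have hb0 : (0:ℝ) ≤ ((n:ℝ)/R) * S u * (‖e u‖ * γ u) :=
        mul_nonneg (mul_nonneg (by positivity) (hSnn u)) (mul_nonneg (norm_nonneg _) h2.le)
      simp only [hbound]
      rw [Real.norm_eq_abs, abs_of_nonneg hb0]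
      have base : S u * ‖e u‖ ≤ 2⁻¹ * (S u^2 + ‖e u‖^2) := by
        nlinarith [sq_nonneg (S u - ‖e u‖)]
      calc ((n:ℝ)/R) * S u * (‖e u‖ * γ u) = ((n:ℝ)/R) * ((S u * ‖e u‖) * γ u) := by ring
        _ ≤ ((n:ℝ)/R) * ((2⁻¹ * (S u^2 + ‖e u‖^2)) * γ u) :=
            mul_le_mul_of_nonneg_left (mul_le_mul_of_nonneg_right base h2.le) (by positivity)
        _ = ((n:ℝ)/R) * (2⁻¹ * (κ * ((B u).toReal * γ u) + ‖e u‖^2 * γ u)) := by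
            rw [hS2]; ring
    -- the uniform bound on F'
    have hnormconj : ∀ u, ‖(starRingEnd ℂ) (e u)‖ = ‖e u‖ := fun u => norm_star (e u)
    have h_bound : ∀ᵐ u ∂(volume.restrict U), ∀ z ∈ ball z₀ R, ‖F' z u‖ ≤ bound u := by
      filter_upwards [haefin, ae_restrict_mem hUme] with u hu1 hu2
      obtain ⟨h1, h2⟩ := hu1
      intro z hz
      simp only [hF']
      have hns := norm_smul ((starRingEnd ℂ) (e u) * ((γ u : ℝ) : ℂ)) (D z u)
      rw [hns, norm_mul, hnormconj, Complex.norm_real, Real.norm_eq_abs, abs_of_pos h2]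
      calc ‖e u‖ * γ u * ‖D z u‖ ≤ ‖e u‖ * γ u * (((n:ℝ) / R) * S u) :=
            mul_le_mul_of_nonneg_left (hDb u hu2 h1.ne z hz)
              (mul_nonneg (norm_nonneg _) h2.le)
        _ = bound u := by simp only [hbound]; ring
    -- differentiability of the integrand
    have h_diff : ∀ᵐ u ∂(volume.restrict U), ∀ z ∈ ball z₀ R,
        HasFDerivAt (fun z' => f (z', u) * (starRingEnd ℂ) (e u) * (γ u : ℂ)) (F' z u) z := by
      filter_upwards [ae_restrict_mem hUme] with u hu
      intro z hz
      have h1 := (hpd (hballM hz) hu).mul_const ((starRingEnd ℂ) (e u) * (γ u : ℂ))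
      simp only [hF']
      have heq : (fun z' => f (z', u) * (starRingEnd ℂ) (e u) * (γ u : ℂ))
          = fun z' => f (z', u) * ((starRingEnd ℂ) (e u) * (γ u : ℂ)) := by
        funext z'; ring
      rw [heq]
      exact h1
    have hF_meas : ∀ᶠ z in nhds z₀, AEStronglyMeasurable
        (fun u => f (z, u) * (starRingEnd ℂ) (e u) * (γ u : ℂ)) (volume.restrict U) := by
      filter_upwards [hMo.mem_nhds hz₀] with z hz
      exact (hInt z hz).aestronglyMeasurable
    have hF'_meas : AEStronglyMeasurable (fun u => F' z₀ u) (volume.restrict U) := by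
      simp only [hF']
      apply AEStronglyMeasurable.fun_smul
      · exact ((Complex.continuous_conj.comp_continuousOn hec).aestronglyMeasurable hUme).mul
          ((Complex.measurable_ofReal.comp hγm).aestronglyMeasurable)
      · exact haesmD z₀ hz₀
    have hF'int : Integrable (fun u => F' z₀ u) (volume.restrict U) := by
      refine hboundint.mono' hF'_meas ?_
      filter_upwards [h_bound] with u hb
      exact hb z₀ (mem_ball_self hR)
    exact ⟨hasFDerivAt_integral_of_dominated_of_fderiv_le (ball_mem_nhds z₀ hR) hF_meas (hInt z₀ hz₀)
      hF'_meas h_bound hboundint h_diff, hF'int⟩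
  refine ⟨hInt, ?_, ?_⟩
  · exact fun z hz => ((key z hz).1.differentiableAt).differentiableWithinAt
  · intro j z hz
    rw [(key z hz).1.fderiv, ContinuousLinearMap.integral_apply (key z hz).2]
    apply setIntegral_congr_fun hUme
    intro u _
    simp only [hF', ContinuousLinearMap.smul_apply, smul_eq_mul]
    ring

end Aux
end
end
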